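/- arXiv:0906.3896 — 11 statements merged into one kernel-verified Lean document; each statement's English description precedes it below -/
import Mathlib

section
/- Let d ≥ 1, r ≥ 0, and let C ⊆ ℝ^d be a set of centers that is centrally symmetric (c ∈ C implies −c ∈ C). Suppose some line {p + t•v : t ∈ ℝ} with v ≠ 0 intersects the closed ball of radius r around every center c ∈ C. Then the parallel line through the origin {t•v : t ∈ ℝ} also intersects the closed ball of radius r around every center c ∈ C. -/
/-- If a set of centers is centrally symmetric and some line `{p + t • v}` (with `v ≠ 0`)
intersects the closed ball of radius `r` around every center, then the parallel line
through the origin `{t • v}` does so as well. -/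
theorem translate_stabbing_line_to_origin (d : ℕ) (hd : 1 ≤ d) (r : ℝ) (hr : 0 ≤ r)
    (C : Set (EuclideanSpace ℝ (Fin d))) (hC : ∀ c ∈ C, -c ∈ C)
    (p v : EuclideanSpace ℝ (Fin d)) (hv : v ≠ 0)
    (h : ∀ c ∈ C, ∃ t : ℝ, ‖(p + t • v) - c‖ ≤ r) :
    ∀ c ∈ C, ∃ t : ℝ, ‖t • v - c‖ ≤ r := by
  intro c hc
  obtain ⟨t₁, h₁⟩ := h c hc
  obtain ⟨t₂, h₂⟩ := h (-c) (hC c hc)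
  refine ⟨(t₁ - t₂) / 2, ?_⟩
  have key : ((t₁ - t₂) / 2) • v - c
      = (2⁻¹ : ℝ) • (((p + t₁ • v) - c) - ((p + t₂ • v) - (-c))) := by
    module
  rw [key, norm_smul]
  have := norm_sub_le ((p + t₁ • v) - c) ((p + t₂ • v) - (-c))
  have hn : ‖(2⁻¹ : ℝ)‖ = 2⁻¹ := by norm_num
  rw [hn]
  nlinarith [norm_nonneg ((p + t₁ • v) - c)]
end

section
/- Let n ≥ 1 and k ≥ 1 be integers, and let F = {□_n(−i·n, 0) : 1 ≤ i ≤ 6k+1} be the family of 6k+1 open squares of side n whose lower-left corners are (−n, 0), (−2n, 0), …, (−(6k+1)n, 0). If L is a set of at most 6k axis-parallel lines that stabs F (every square of F is intersected by some line of L), then L contains a horizontal line {(x,c) : x ∈ ℝ} with 0 < c < n. -/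
/-- The vertical line `x = c`. -/
def vLine (c : ℝ) : Set (ℝ × ℝ) := {p : ℝ × ℝ | p.1 = c}

/-- The horizontal line `y = c`. -/
def hLine (c : ℝ) : Set (ℝ × ℝ) := {p : ℝ × ℝ | p.2 = c}

/-- An axis-parallel line is a vertical or a horizontal line. -/
def IsAPLine (L : Set (ℝ × ℝ)) : Prop := (∃ c, L = vLine c) ∨ (∃ c, L = hLine c)

/-- The open axis-parallel square `□_l(x, y) = (x, x+l) × (y, y+l)`. -/
def openSquare (l x y : ℝ) : Set (ℝ × ℝ) := Set.Ioo x (x + l) ×ˢ Set.Ioo y (y + l)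

/-- If at most `6k` axis-parallel lines stab the forcing gadget
`F_h = {□_n(−i·n, 0) : 1 ≤ i ≤ 6k+1}`, then one of them is a horizontal line
`y = c` with `0 < c < n`. -/
theorem forcing_gadget (n k : ℕ) (hn : 1 ≤ n) (hk : 1 ≤ k)
    (L : Finset (Set (ℝ × ℝ))) (hL : ∀ l ∈ L, IsAPLine l) (hcard : L.card ≤ 6 * k)
    (hstab : ∀ i : ℕ, 1 ≤ i → i ≤ 6 * k + 1 →
      ∃ l ∈ L, (l ∩ openSquare (n : ℝ) (-((i : ℝ) * n)) 0).Nonempty) :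
    ∃ c : ℝ, 0 < c ∧ c < n ∧ hLine c ∈ L := by
  by_contra hcon
  push_neg at hcon
  have key : ∀ i : ℕ, ∃ l, i ∈ Finset.Icc 1 (6 * k + 1) →
      l ∈ L ∧ (l ∩ openSquare (n : ℝ) (-((i : ℝ) * n)) 0).Nonempty := by
    intro i
    by_cases hi : i ∈ Finset.Icc 1 (6 * k + 1)
    · simp only [Finset.mem_Icc] at hi
      obtain ⟨l, hl, hne⟩ := hstab i hi.1 hi.2
      exact ⟨l, fun _ => ⟨hl, hne⟩⟩
    · exact ⟨∅, fun h => absurd h hi⟩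
  choose f hf using key
  have hmem : ∀ i ∈ Finset.Icc 1 (6 * k + 1), f i ∈ L := fun i hi => (hf i hi).1
  have hstabf : ∀ i ∈ Finset.Icc 1 (6 * k + 1),
      (f i ∩ openSquare (n : ℝ) (-((i : ℝ) * n)) 0).Nonempty := fun i hi => (hf i hi).2
  have hnpos : (0 : ℝ) < n := by exact_mod_cast hn
  -- a single line cannot stab two distinct squares
  have hinj : Set.InjOn f (Finset.Icc 1 (6 * k + 1)) := by
    intro i hi j hj hij
    by_contra hne
    obtain ⟨p, hpL, hpS⟩ := hstabf i hi
    obtain ⟨q, hqL, hqS⟩ := hstabf j hj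
    rw [hij] at hpL
    rcases hL (f j) (hmem j hj) with ⟨c, hc⟩ | ⟨c, hc⟩
    · -- vertical line
      rw [hc] at hpL hqL
      have hp1 : p.1 = c := hpL
      have hq1 : q.1 = c := hqL
      have hpx := hpS.1
      have hqx := hqS.1
      simp only [Set.mem_Ioo] at hpx hqx
      rcases lt_trichotomy i j with h | h | h
      · have : (i : ℝ) + 1 ≤ (j : ℝ) := by exact_mod_cast h
        nlinarith [hpx.1, hpx.2, hqx.1, hqx.2]
      · exact hne h
      · have : (j : ℝ) + 1 ≤ (i : ℝ) := by exact_mod_cast h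
        nlinarith [hpx.1, hpx.2, hqx.1, hqx.2]
    · -- horizontal line : impossible by hcon
      rw [hc] at hqL
      have hq2 : q.2 = c := hqL
      have hqy := hqS.2
      simp only [Set.mem_Ioo] at hqy
      have h0 : 0 < c := by rw [← hq2]; linarith [hqy.1]
      have h1 : c < n := by rw [← hq2]; linarith [hqy.2]
      exact hcon c h0 h1 (hc ▸ hmem j hj)
  have hcard2 : (Finset.Icc 1 (6 * k + 1)).card ≤ L.card :=
    Finset.card_le_card_of_injOn f hmem hinj
  rw [Nat.card_Icc] at hcard2
  omega
end

section
/- Let n ≥ 2 be an integer and let E ⊆ {1,…,n} × {1,…,n} be a relation. Define the family A = {□_{n−1}(i', j') : (i', j') ∈ {1,…,n}², (i', j') ∉ E} of open squares of side n−1. Let i, j ∈ {1,…,n} and let c⁻, c⁺, d⁻, d⁺ be real numbers with c⁻ ∈ (i−1, i), c⁺ ∈ (n+i−1, n+i), d⁻ ∈ (j−1, j) and d⁺ ∈ (n+j−1, n+j). Then the four lines {x = c⁻}, {x = c⁺}, {y = d⁻}, {y = d⁺} together intersect every square of A if and only if (i, j) ∈ E. -/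
/-- Two antipodal vertical lines representing `i` and two antipodal horizontal lines
representing `j` stab all squares of the adjacency gadget
`A = {□_{n−1}(i', j') : (i', j') ∉ E}` iff `(i, j) ∈ E`. -/
theorem adjacency_gadget (n : ℕ) (hn : 2 ≤ n) (E : Set (ℕ × ℕ))
    (hE : E ⊆ Set.Icc 1 n ×ˢ Set.Icc 1 n)
    (i j : ℕ) (hi : i ∈ Set.Icc 1 n) (hj : j ∈ Set.Icc 1 n)
    (cm cp dm dp : ℝ)
    (hcm : cm ∈ Set.Ioo ((i : ℝ) - 1) (i : ℝ))
    (hcp : cp ∈ Set.Ioo ((n : ℝ) + i - 1) ((n : ℝ) + i))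
    (hdm : dm ∈ Set.Ioo ((j : ℝ) - 1) (j : ℝ))
    (hdp : dp ∈ Set.Ioo ((n : ℝ) + j - 1) ((n : ℝ) + j)) :
    (∀ i' j' : ℕ, i' ∈ Set.Icc 1 n → j' ∈ Set.Icc 1 n → (i', j') ∉ E →
      ((vLine cm ∪ vLine cp ∪ hLine dm ∪ hLine dp) ∩
        openSquare ((n : ℝ) - 1) (i' : ℝ) (j' : ℝ)).Nonempty) ↔ (i, j) ∈ E := by
  obtain ⟨hi1, hi2⟩ := hi
  obtain ⟨hj1, hj2⟩ := hj
  obtain ⟨hcm1, hcm2⟩ := hcm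
  obtain ⟨hcp1, hcp2⟩ := hcp
  obtain ⟨hdm1, hdm2⟩ := hdm
  obtain ⟨hdp1, hdp2⟩ := hdp
  have hn' : (2 : ℝ) ≤ n := by exact_mod_cast hn
  have hi1' : (1 : ℝ) ≤ i := by exact_mod_cast hi1
  have hi2' : (i : ℝ) ≤ n := by exact_mod_cast hi2
  have hj1' : (1 : ℝ) ≤ j := by exact_mod_cast hj1
  have hj2' : (j : ℝ) ≤ n := by exact_mod_cast hj2
  constructor
  · intro h
    by_contra hne
    obtain ⟨p, hp, hps⟩ := h i j ⟨hi1, hi2⟩ ⟨hj1, hj2⟩ hne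
    obtain ⟨⟨hx1, hx2⟩, ⟨hy1, hy2⟩⟩ := hps
    rcases hp with ((h'|h')|h')|h' <;>
      simp only [vLine, hLine, Set.mem_setOf_eq] at h' <;> linarith [h']
  · intro hmem i' j' ⟨hi'1, hi'2⟩ ⟨hj'1, hj'2⟩ hnotE
    have hi'1' : (1 : ℝ) ≤ i' := by exact_mod_cast hi'1
    have hi'2' : (i' : ℝ) ≤ n := by exact_mod_cast hi'2
    have hj'1' : (1 : ℝ) ≤ j' := by exact_mod_cast hj'1
    have hj'2' : (j' : ℝ) ≤ n := by exact_mod_cast hj'2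
    have hne : (i', j') ≠ (i, j) := fun h' => hnotE (h' ▸ hmem)
    rcases lt_trichotomy i' i with hlt | heq | hgt
    · have hlt' : (i' : ℝ) + 1 ≤ i := by exact_mod_cast hlt
      refine ⟨(cm, (j' : ℝ) + ((n : ℝ) - 1) / 2), Or.inl (Or.inl (Or.inl rfl)),
        ⟨?_, ?_⟩, ⟨?_, ?_⟩⟩ <;> simp only [] <;> linarith
    · rcases lt_trichotomy j' j with hlt | heq2 | hgt
      · have hlt' : (j' : ℝ) + 1 ≤ j := by exact_mod_cast hlt
        refine ⟨((i' : ℝ) + ((n : ℝ) - 1) / 2, dm), Or.inl (Or.inr rfl),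
          ⟨?_, ?_⟩, ⟨?_, ?_⟩⟩ <;> simp only [] <;> linarith
      · exact absurd (by rw [heq, heq2]) hne
      · have hgt' : (j : ℝ) + 1 ≤ j' := by exact_mod_cast hgt
        refine ⟨((i' : ℝ) + ((n : ℝ) - 1) / 2, dp), Or.inr rfl,
          ⟨?_, ?_⟩, ⟨?_, ?_⟩⟩ <;> simp only [] <;> linarith
    · have hgt' : (i : ℝ) + 1 ≤ i' := by exact_mod_cast hgt
      refine ⟨(cp, (j' : ℝ) + ((n : ℝ) - 1) / 2), Or.inl (Or.inl (Or.inr rfl)),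
        ⟨?_, ?_⟩, ⟨?_, ?_⟩⟩ <;> simp only [] <;> linarith
end

section
/- Let n ≥ 2 be an integer and define the family of open squares C = {□_{n−1}(i, i−n+1) : 1 ≤ i ≤ n−1} ∪ {□_{n−1}(i−n, n+i−1) : 2 ≤ i ≤ n}. Let a, b ∈ {1,…,n} and let c⁻, c⁺ be real numbers with c⁻ ∈ (a−1, a) and c⁺ ∈ (n+b−1, n+b). Then there exists a real number c such that every square of C is intersected by the horizontal line {y = c⁻}, the horizontal line {y = c⁺}, or the vertical line {x = c}, if and only if b ≥ a. -/
/-- The horizontal consistency gadget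
`C_h = {□_{n−1}(i, i−n+1) : 1 ≤ i ≤ n−1} ∪ {□_{n−1}(i−n, n+i−1) : 2 ≤ i ≤ n}`. -/
def ChGadget (n : ℕ) : Set (Set (ℝ × ℝ)) :=
  {s | ∃ i : ℕ, 1 ≤ i ∧ i ≤ n - 1 ∧
      s = openSquare ((n : ℝ) - 1) (i : ℝ) ((i : ℝ) - n + 1)} ∪
  {s | ∃ i : ℕ, 2 ≤ i ∧ i ≤ n ∧
      s = openSquare ((n : ℝ) - 1) ((i : ℝ) - n) ((n : ℝ) + i - 1)}

/-- Two antipodal horizontal lines representing `a` (negative) and `b` (positive) can be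
completed by a single vertical line to stab the whole consistency gadget iff `b ≥ a`. -/
theorem consistency_gadget (n : ℕ) (hn : 2 ≤ n) (a b : ℕ)
    (ha : a ∈ Set.Icc 1 n) (hb : b ∈ Set.Icc 1 n)
    (cm cp : ℝ) (hcm : cm ∈ Set.Ioo ((a : ℝ) - 1) (a : ℝ))
    (hcp : cp ∈ Set.Ioo ((n : ℝ) + b - 1) ((n : ℝ) + b)) :
    (∃ c : ℝ, ∀ s ∈ ChGadget n,
      ((hLine cm ∪ hLine cp ∪ vLine c) ∩ s).Nonempty) ↔ a ≤ b := by
  obtain ⟨ha1, han⟩ := ha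
  obtain ⟨hb1, hbn⟩ := hb
  obtain ⟨hcm1, hcm2⟩ := hcm
  obtain ⟨hcp1, hcp2⟩ := hcp
  have hnR : (2:ℝ) ≤ n := by exact_mod_cast hn
  have haR : (1:ℝ) ≤ a := by exact_mod_cast ha1
  have hanR : (a:ℝ) ≤ n := by exact_mod_cast han
  have hbR : (1:ℝ) ≤ b := by exact_mod_cast hb1
  have hbnR : (b:ℝ) ≤ n := by exact_mod_cast hbn
  constructor
  · rintro ⟨c, hc⟩
    by_contra hab
    push_neg at hab
    have ha2 : 2 ≤ a := by omega
    have hbn1 : b + 1 ≤ n := by omega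
    -- type-1 square with i = a - 1 forces c > a - 1
    have h1 : openSquare ((n:ℝ)-1) ((a-1:ℕ) : ℝ) (((a-1:ℕ) : ℝ) - n + 1) ∈ ChGadget n := by
      left; exact ⟨a - 1, by omega, by omega, rfl⟩
    have hcast1 : ((a-1:ℕ) : ℝ) = (a:ℝ) - 1 := by
      rw [Nat.cast_sub ha1, Nat.cast_one]
    obtain ⟨p, hp_line, hp_sq⟩ := hc _ h1
    simp only [openSquare, Set.mem_prod, Set.mem_Ioo, hcast1] at hp_sq
    obtain ⟨⟨hx1, hx2⟩, hy1, hy2⟩ := hp_sq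
    have hca : (a:ℝ) - 1 < c := by
      rcases hp_line with (h | h) | h
      · simp only [hLine, Set.mem_setOf_eq] at h; linarith
      · simp only [hLine, Set.mem_setOf_eq] at h; linarith
      · simp only [vLine, Set.mem_setOf_eq] at h; linarith [h ▸ hx1]
    -- type-2 square with i = b + 1 forces c < b
    have h2 : openSquare ((n:ℝ)-1) (((b+1:ℕ) : ℝ) - n) ((n:ℝ) + (b+1:ℕ) - 1) ∈ ChGadget n := by
      right; exact ⟨b + 1, by omega, by omega, rfl⟩
    obtain ⟨q, hq_line, hq_sq⟩ := hc _ h2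
    simp only [openSquare, Set.mem_prod, Set.mem_Ioo, Nat.cast_add, Nat.cast_one] at hq_sq
    obtain ⟨⟨hx1', hx2'⟩, hy1', hy2'⟩ := hq_sq
    have hcb : c < (b:ℝ) := by
      rcases hq_line with (h | h) | h
      · simp only [hLine, Set.mem_setOf_eq] at h; linarith
      · simp only [hLine, Set.mem_setOf_eq] at h; linarith
      · simp only [vLine, Set.mem_setOf_eq] at h
        have := h ▸ hx2'; linarith
    have : (a:ℝ) - 1 < b := by linarith
    have : a < b + 1 := by exact_mod_cast (by linarith : (a:ℝ) < (b:ℝ) + 1)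
    omega
  · intro hab
    have habR : (a:ℝ) ≤ b := by exact_mod_cast hab
    refine ⟨((a:ℝ) - 1 + b) / 2, ?_⟩
    rintro s hs
    rcases hs with ⟨i, hi1, hi2, rfl⟩ | ⟨i, hi2, hin, rfl⟩
    · have hiR1 : (1:ℝ) ≤ i := by exact_mod_cast hi1
      have hiR2 : (i:ℝ) ≤ (n:ℝ) - 1 := by
        have h : i + 1 ≤ n := by omega
        have := (Nat.cast_le (α := ℝ)).2 h
        push_cast at this; linarith
      by_cases hia : a ≤ i
      · have hiaR : (a:ℝ) ≤ i := by exact_mod_cast hia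
        refine ⟨((i:ℝ) + ((n:ℝ)-1)/2, cm), Or.inl (Or.inl rfl), ?_⟩
        simp only [openSquare, Set.mem_prod, Set.mem_Ioo]
        refine ⟨⟨by linarith, by linarith⟩, by linarith, by linarith⟩
      · have hiaR : (i:ℝ) ≤ (a:ℝ) - 1 := by
          have h : i + 1 ≤ a := by omega
          have := (Nat.cast_le (α := ℝ)).2 h
          push_cast at this; linarith
        refine ⟨(((a:ℝ) - 1 + b) / 2, (i:ℝ) - n + 1 + ((n:ℝ)-1)/2), Or.inr rfl, ?_⟩
        simp only [openSquare, Set.mem_prod, Set.mem_Ioo]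
        refine ⟨⟨by linarith, by linarith⟩, by linarith, by linarith⟩
    · have hiR1 : (2:ℝ) ≤ i := by exact_mod_cast hi2
      have hiR2 : (i:ℝ) ≤ n := by exact_mod_cast hin
      by_cases hib : i ≤ b
      · have hibR : (i:ℝ) ≤ b := by exact_mod_cast hib
        refine ⟨((i:ℝ) - n + ((n:ℝ)-1)/2, cp), Or.inl (Or.inr rfl), ?_⟩
        simp only [openSquare, Set.mem_prod, Set.mem_Ioo]
        refine ⟨⟨by linarith, by linarith⟩, by linarith, by linarith⟩
      · have hibR : (b:ℝ) + 1 ≤ i := by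
          have h : b + 1 ≤ i := by omega
          have := (Nat.cast_le (α := ℝ)).2 h
          push_cast at this; linarith
        refine ⟨(((a:ℝ) - 1 + b) / 2, (n:ℝ) + i - 1 + ((n:ℝ)-1)/2), Or.inr rfl, ?_⟩
        simp only [openSquare, Set.mem_prod, Set.mem_Ioo]
        refine ⟨⟨by linarith, by linarith⟩, by linarith, by linarith⟩
end

section
/- Let n ≥ 2, k ≥ 1 and let G = ({1,…,n}, E) be a simple directed graph without loops (E ⊆ {1,…,n}² irreflexive). Then the family of open squares S'(G,k) can be stabbed by 6k axis-parallel lines if and only if G has a k-clique, i.e., a set C ⊆ {1,…,n} of k distinct vertices such that (u, v) ∈ E for all u, v ∈ C with u ≠ v. -/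
/-- Translating a set of points in the plane by a vector `v`. -/
def translateSet (v : ℝ × ℝ) (s : Set (ℝ × ℝ)) : Set (ℝ × ℝ) :=
  (fun p => (p.1 + v.1, p.2 + v.2)) '' s

/-- Translating a family of plane sets by a vector `v`. -/
def translateFam (v : ℝ × ℝ) (F : Set (Set (ℝ × ℝ))) : Set (Set (ℝ × ℝ)) :=
  translateSet v '' F

/-- The horizontal forcing gadget `F_h`. -/
def FhGadget (n k : ℕ) : Set (Set (ℝ × ℝ)) :=
  {s | ∃ i : ℕ, 1 ≤ i ∧ i ≤ 6 * k + 1 ∧ s = openSquare (n : ℝ) (-((i : ℝ) * n)) 0}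

/-- The vertical forcing gadget `F_v`. -/
def FvGadget (n k : ℕ) : Set (Set (ℝ × ℝ)) :=
  {s | ∃ i : ℕ, 1 ≤ i ∧ i ≤ 6 * k + 1 ∧ s = openSquare (n : ℝ) 0 (-((i : ℝ) * n))}

/-- The adjacency gadget `A = {□_{n−1}(i, j) : (i, j) ∈ {1,…,n}², (i, j) ∉ E}`. -/
def AGadget (n : ℕ) (E : Set (ℕ × ℕ)) : Set (Set (ℝ × ℝ)) :=
  {s | ∃ i j : ℕ, 1 ≤ i ∧ i ≤ n ∧ 1 ≤ j ∧ j ≤ n ∧ (i, j) ∉ E ∧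
      s = openSquare ((n : ℝ) - 1) (i : ℝ) (j : ℝ)}

/-- The diagonal gadget `D = {□_{n−1}(i, j) : 1 ≤ i ≠ j ≤ n}`. -/
def DGadget (n : ℕ) : Set (Set (ℝ × ℝ)) :=
  {s | ∃ i j : ℕ, 1 ≤ i ∧ i ≤ n ∧ 1 ≤ j ∧ j ≤ n ∧ i ≠ j ∧
      s = openSquare ((n : ℝ) - 1) (i : ℝ) (j : ℝ)}

/-- The vertical consistency gadget `C_v`. -/
def CvGadget (n : ℕ) : Set (Set (ℝ × ℝ)) :=
  {s | ∃ i : ℕ, 1 ≤ i ∧ i ≤ n - 1 ∧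
      s = openSquare ((n : ℝ) - 1) ((i : ℝ) - n + 1) (i : ℝ)} ∪
  {s | ∃ i : ℕ, 2 ≤ i ∧ i ≤ n ∧
      s = openSquare ((n : ℝ) - 1) ((n : ℝ) + i - 1) ((i : ℝ) - n)}

/-- The full construction `S'(G, k)`. -/
def SPrime (n k : ℕ) (E : Set (ℕ × ℕ)) : Set (Set (ℝ × ℝ)) :=
  (⋃ i ∈ Set.Icc 1 k, ⋃ j ∈ Set.Icc 1 k,
    if i = j then (∅ : Set (Set (ℝ × ℝ)))
    else translateFam (3 * (n : ℝ) * i, 3 * (n : ℝ) * j) (AGadget n E)) ∪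
  (⋃ i ∈ Set.Icc 1 k, translateFam (3 * (n : ℝ) * i, 3 * (n : ℝ) * i) (DGadget n)) ∪
  (⋃ i ∈ Set.Icc 1 k, translateFam (-(3 * (n : ℝ) * i), 3 * (n : ℝ) * i) (ChGadget n)) ∪
  (⋃ i ∈ Set.Icc 1 k, translateFam (3 * (n : ℝ) * i, -(3 * (n : ℝ) * i)) (CvGadget n)) ∪
  (⋃ i ∈ Set.Icc 1 k,
    translateFam (-(3 * (n : ℝ) * (k + 1)), 3 * (n : ℝ) * i) (FhGadget n k)) ∪
  (⋃ i ∈ Set.Icc 1 k,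
    translateFam (-(3 * (n : ℝ) * (k + 1)), 3 * (n : ℝ) * i + n) (FhGadget n k)) ∪
  (⋃ i ∈ Set.Icc 1 k,
    translateFam (3 * (n : ℝ) * i, -(3 * (n : ℝ) * (k + 1))) (FvGadget n k)) ∪
  (⋃ i ∈ Set.Icc 1 k,
    translateFam (3 * (n : ℝ) * i + n, -(3 * (n : ℝ) * (k + 1))) (FvGadget n k)) ∪
  (⋃ i ∈ Set.Icc 1 k,
    translateFam (-(3 * (n : ℝ) * i), -(3 * (n : ℝ) * (k + 1))) (FvGadget n k)) ∪
  (⋃ i ∈ Set.Icc 1 k,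
    translateFam (-(3 * (n : ℝ) * (k + 1)), -(3 * (n : ℝ) * i)) (FhGadget n k))


lemma vLine_inj {c c' : ℝ} (h : vLine c = vLine c') : c = c' := by
  have : (c, (0:ℝ)) ∈ vLine c' := h ▸ (rfl : ((c,(0:ℝ)) : ℝ × ℝ).1 = c)
  exact this

lemma hLine_inj {c c' : ℝ} (h : hLine c = hLine c') : c = c' := by
  have : ((0:ℝ), c) ∈ hLine c' := h ▸ (rfl : (((0:ℝ),c) : ℝ × ℝ).2 = c)
  exact this

lemma vLine_ne_hLine (c c' : ℝ) : vLine c ≠ hLine c' := by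
  intro h
  have h1 : (c, c' + 1) ∈ vLine c := rfl
  rw [h] at h1
  have : c' + 1 = c' := h1
  linarith

lemma vLine_inter {c l x y : ℝ} (hl : 0 < l) :
    (vLine c ∩ openSquare l x y).Nonempty ↔ x < c ∧ c < x + l := by
  constructor
  · rintro ⟨⟨px, py⟩, hp1, hp2⟩
    obtain ⟨⟨h1, h2⟩, _⟩ := hp2
    have : px = c := hp1
    exact ⟨by linarith [this ▸ h1], by linarith [this ▸ h2]⟩
  · rintro ⟨h1, h2⟩
    exact ⟨(c, y + l/2), rfl, ⟨h1, h2⟩, by constructor <;> linarith⟩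

lemma hLine_inter {c l x y : ℝ} (hl : 0 < l) :
    (hLine c ∩ openSquare l x y).Nonempty ↔ y < c ∧ c < y + l := by
  constructor
  · rintro ⟨⟨px, py⟩, hp1, hp2⟩
    obtain ⟨_, ⟨h1, h2⟩⟩ := hp2
    have : py = c := hp1
    exact ⟨by linarith [this ▸ h1], by linarith [this ▸ h2]⟩
  · rintro ⟨h1, h2⟩
    exact ⟨(x + l/2, c), rfl, ⟨by constructor <;> linarith, h1, h2⟩⟩

lemma translateSet_openSquare (v : ℝ × ℝ) (l x y : ℝ) :
    translateSet v (openSquare l x y) = openSquare l (x + v.1) (y + v.2) := by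
  ext ⟨px, py⟩
  simp only [translateSet, openSquare, Set.mem_image, Set.mem_prod, Set.mem_Ioo, Prod.mk.injEq,
    Prod.exists]
  constructor
  · rintro ⟨a, b, ⟨⟨h1, h2⟩, h3, h4⟩, h5, h6⟩
    subst h5; subst h6
    constructor <;> constructor <;> linarith
  · rintro ⟨⟨h1, h2⟩, h3, h4⟩
    exact ⟨px - v.1, py - v.2, ⟨⟨by linarith, by linarith⟩, by linarith, by linarith⟩, by ring, by ring⟩

lemma card_six_le {β : Type*} [DecidableEq β] (a b c d e f : β) :
    ({a, b, c, d, e, f} : Finset β).card ≤ 6 := by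
  refine le_trans (Finset.card_insert_le _ _) ?_
  refine le_trans (Nat.add_le_add_right (Finset.card_insert_le _ _) 1) ?_
  refine le_trans (Nat.add_le_add_right (Nat.add_le_add_right (Finset.card_insert_le _ _) 1) 1) ?_
  refine le_trans (Nat.add_le_add_right (Nat.add_le_add_right (Nat.add_le_add_right (Finset.card_insert_le _ _) 1) 1) 1) ?_
  refine le_trans (Nat.add_le_add_right (Nat.add_le_add_right (Nat.add_le_add_right (Nat.add_le_add_right (Finset.card_insert_le _ _) 1) 1) 1) 1) ?_
  simp

lemma translateSet_openSquare' (a b l x y : ℝ) :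
    translateSet (a, b) (openSquare l x y) = openSquare l (x + a) (y + b) := by
  simpa using translateSet_openSquare (a, b) l x y

lemma mul3_step {n : ℝ} (hn : 0 ≤ n) {i j : ℕ} (h : i < j) :
    3 * n * (i:ℝ) + 3 * n ≤ 3 * n * j := by
  have h1 : (i:ℝ) + 1 ≤ j := by exact_mod_cast h
  have h2 := mul_le_mul_of_nonneg_left h1 (by linarith : (0:ℝ) ≤ 3 * n)
  linarith

lemma mul3_mono {n : ℝ} (hn : 0 ≤ n) {i j : ℕ} (h : i ≤ j) :
    3 * n * (i:ℝ) ≤ 3 * n * j := by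
  have h1 : (i:ℝ) ≤ j := by exact_mod_cast h
  have h2 := mul_le_mul_of_nonneg_left h1 (by linarith : (0:ℝ) ≤ 3 * n)
  linarith

lemma mul3_ge {n : ℝ} (hn : 0 ≤ n) {i : ℕ} (h : 1 ≤ i) : 3 * n ≤ 3 * n * (i:ℝ) := by
  have h1 : (1:ℝ) ≤ i := by exact_mod_cast h
  have h2 := mul_le_mul_of_nonneg_left h1 (by linarith : (0:ℝ) ≤ 3 * n)
  linarith

/-- The offsets of the six strips of block `i`. -/
noncomputable def offR (n : ℝ) (i t : ℕ) : ℝ :=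
  if t = 0 then 3 * n * i else if t = 1 then 3 * n * i + n else -(3 * n * i)

lemma offset_eq {n : ℝ} (hn : 2 ≤ n) {i j ti tj : ℕ} (hi : 1 ≤ i) (hj : 1 ≤ j)
    (hti : ti < 3) (htj : tj < 3) {x y : ℝ}
    (hx1 : offR n i ti < x) (hx2 : x < offR n i ti + n)
    (hy1 : offR n j tj < y) (hy2 : y < offR n j tj + n) (hxy : x = y) :
    i = j ∧ ti = tj := by
  have hn0 : (0:ℝ) ≤ n := by linarith
  subst hxy
  have hgi := mul3_ge hn0 hi
  have hgj := mul3_ge hn0 hj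
  interval_cases ti <;> interval_cases tj <;>
    norm_num [offR] at hx1 hx2 hy1 hy2 <;>
    first
    | (refine ⟨?_, rfl⟩
       by_contra hne
       rcases Nat.lt_trichotomy i j with h | h | h
       · linarith [mul3_step hn0 h]
       · exact absurd h hne
       · linarith [mul3_step hn0 h])
    | (exfalso
       rcases Nat.lt_trichotomy i j with h | h | h
       · linarith [mul3_step hn0 h]
       · subst h; linarith
       · linarith [mul3_step hn0 h])

lemma exists_hLine_in_strip {k n : ℕ} (hn : 1 ≤ n) {L : Finset (Set (ℝ × ℝ))}
    (hcard : L.card ≤ 6 * k) (hAP : ∀ l ∈ L, IsAPLine l) (X Y : ℝ)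
    (hstab : ∀ j : ℕ, 1 ≤ j → j ≤ 6 * k + 1 →
      ∃ l ∈ L, (l ∩ translateSet (X, Y) (openSquare (n:ℝ) (-((j:ℝ) * n)) 0)).Nonempty) :
    ∃ c, hLine c ∈ L ∧ Y < c ∧ c < Y + n := by
  have hn' : (0:ℝ) < n := by exact_mod_cast hn
  by_contra hno
  push_neg at hno
  have hch : ∀ j : ℕ, ∃ l, 1 ≤ j → j ≤ 6 * k + 1 →
      l ∈ L ∧ (l ∩ translateSet (X, Y) (openSquare (n:ℝ) (-((j:ℝ) * n)) 0)).Nonempty := by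
    intro j
    by_cases h : 1 ≤ j ∧ j ≤ 6 * k + 1
    · obtain ⟨l, hl, hl2⟩ := hstab j h.1 h.2
      exact ⟨l, fun _ _ => ⟨hl, hl2⟩⟩
    · exact ⟨∅, fun h1 h2 => absurd ⟨h1, h2⟩ h⟩
  choose f hf using hch
  have hv : ∀ j, 1 ≤ j → j ≤ 6 * k + 1 →
      ∃ c, f j = vLine c ∧ -((j:ℝ) * n) + X < c ∧ c < -((j:ℝ) * n) + X + n := by
    intro j h1 h2
    obtain ⟨hl, hne⟩ := hf j h1 h2
    rw [translateSet_openSquare'] at hne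
    rcases hAP _ hl with ⟨c, hc⟩ | ⟨c, hc⟩
    · rw [hc, vLine_inter hn'] at hne
      exact ⟨c, hc, hne.1, hne.2⟩
    · rw [hc, hLine_inter hn'] at hne
      exact absurd (hno c (hc ▸ hl) (by linarith [hne.1])) (by push_neg; linarith [hne.2])
  have hmap : ∀ j ∈ Finset.Icc 1 (6 * k + 1), f j ∈ L := by
    intro j hj
    rw [Finset.mem_Icc] at hj
    exact (hf j hj.1 hj.2).1
  have hcardlt : L.card < (Finset.Icc 1 (6 * k + 1)).card := by
    rw [Nat.card_Icc]; omega
  obtain ⟨j1, hj1, j2, hj2, hjne, heq⟩ :=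
    Finset.exists_ne_map_eq_of_card_lt_of_maps_to hcardlt hmap
  rw [Finset.mem_Icc] at hj1 hj2
  obtain ⟨c1, hc1, hc1a, hc1b⟩ := hv j1 hj1.1 hj1.2
  obtain ⟨c2, hc2, hc2a, hc2b⟩ := hv j2 hj2.1 hj2.2
  rw [hc1, hc2] at heq
  have hcc : c1 = c2 := vLine_inj heq
  subst hcc
  rcases lt_or_gt_of_ne hjne with h | h
  · have : ((j1:ℝ) + 1) * n ≤ (j2:ℝ) * n := by
      have h1 : (j1:ℝ) + 1 ≤ j2 := by exact_mod_cast h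
      exact mul_le_mul_of_nonneg_right h1 hn'.le
    linarith
  · have : ((j2:ℝ) + 1) * n ≤ (j1:ℝ) * n := by
      have h1 : (j2:ℝ) + 1 ≤ j1 := by exact_mod_cast h
      exact mul_le_mul_of_nonneg_right h1 hn'.le
    linarith

lemma exists_vLine_in_strip {k n : ℕ} (hn : 1 ≤ n) {L : Finset (Set (ℝ × ℝ))}
    (hcard : L.card ≤ 6 * k) (hAP : ∀ l ∈ L, IsAPLine l) (X Y : ℝ)
    (hstab : ∀ j : ℕ, 1 ≤ j → j ≤ 6 * k + 1 →
      ∃ l ∈ L, (l ∩ translateSet (X, Y) (openSquare (n:ℝ) 0 (-((j:ℝ) * n)))).Nonempty) :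
    ∃ c, vLine c ∈ L ∧ X < c ∧ c < X + n := by
  have hn' : (0:ℝ) < n := by exact_mod_cast hn
  by_contra hno
  push_neg at hno
  have hch : ∀ j : ℕ, ∃ l, 1 ≤ j → j ≤ 6 * k + 1 →
      l ∈ L ∧ (l ∩ translateSet (X, Y) (openSquare (n:ℝ) 0 (-((j:ℝ) * n)))).Nonempty := by
    intro j
    by_cases h : 1 ≤ j ∧ j ≤ 6 * k + 1
    · obtain ⟨l, hl, hl2⟩ := hstab j h.1 h.2
      exact ⟨l, fun _ _ => ⟨hl, hl2⟩⟩
    · exact ⟨∅, fun h1 h2 => absurd ⟨h1, h2⟩ h⟩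
  choose f hf using hch
  have hv : ∀ j, 1 ≤ j → j ≤ 6 * k + 1 →
      ∃ c, f j = hLine c ∧ -((j:ℝ) * n) + Y < c ∧ c < -((j:ℝ) * n) + Y + n := by
    intro j h1 h2
    obtain ⟨hl, hne⟩ := hf j h1 h2
    rw [translateSet_openSquare'] at hne
    rcases hAP _ hl with ⟨c, hc⟩ | ⟨c, hc⟩
    · rw [hc, vLine_inter hn'] at hne
      exact absurd (hno c (hc ▸ hl) (by linarith [hne.1])) (by push_neg; linarith [hne.2])
    · rw [hc, hLine_inter hn'] at hne
      exact ⟨c, hc, hne.1, hne.2⟩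
  have hmap : ∀ j ∈ Finset.Icc 1 (6 * k + 1), f j ∈ L := by
    intro j hj
    rw [Finset.mem_Icc] at hj
    exact (hf j hj.1 hj.2).1
  have hcardlt : L.card < (Finset.Icc 1 (6 * k + 1)).card := by
    rw [Nat.card_Icc]; omega
  obtain ⟨j1, hj1, j2, hj2, hjne, heq⟩ :=
    Finset.exists_ne_map_eq_of_card_lt_of_maps_to hcardlt hmap
  rw [Finset.mem_Icc] at hj1 hj2
  obtain ⟨c1, hc1, hc1a, hc1b⟩ := hv j1 hj1.1 hj1.2
  obtain ⟨c2, hc2, hc2a, hc2b⟩ := hv j2 hj2.1 hj2.2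
  rw [hc1, hc2] at heq
  have hcc : c1 = c2 := hLine_inj heq
  subst hcc
  rcases lt_or_gt_of_ne hjne with h | h
  · have : ((j1:ℝ) + 1) * n ≤ (j2:ℝ) * n := by
      have h1 : (j1:ℝ) + 1 ≤ j2 := by exact_mod_cast h
      exact mul_le_mul_of_nonneg_right h1 hn'.le
    linarith
  · have : ((j2:ℝ) + 1) * n ≤ (j1:ℝ) * n := by
      have h1 : (j2:ℝ) + 1 ≤ j1 := by exact_mod_cast h
      exact mul_le_mul_of_nonneg_right h1 hn'.le
    linarith

lemma ceil_gap {n : ℕ} (hn : 2 ≤ n) {g a b : ℝ} (hg0 : 0 < g) (hgn : g < n)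
    (hb0 : 0 < b) (han : a < n)
    (h1 : ∀ m : ℕ, 1 ≤ m → m ≤ n - 1 → a < m ∨ (m:ℝ) < g)
    (h2 : ∀ m : ℕ, 2 ≤ m → m ≤ n → (m:ℝ) - 1 < b ∨ g < (m:ℝ) - 1) :
    1 ≤ ⌈g⌉₊ ∧ ⌈g⌉₊ ≤ n ∧ a ≤ (⌈g⌉₊:ℝ) ∧ (⌈g⌉₊:ℝ) ≤ b + 1 := by
  have hw1 : 1 ≤ ⌈g⌉₊ := Nat.ceil_pos.mpr hg0
  have hw2 : ⌈g⌉₊ ≤ n := Nat.ceil_le.mpr hgn.le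
  have hge : g ≤ (⌈g⌉₊:ℝ) := Nat.le_ceil g
  have hlt : (⌈g⌉₊:ℝ) < g + 1 := Nat.ceil_lt_add_one hg0.le
  have han : a ≤ (⌈g⌉₊:ℝ) := by
    by_contra hc
    push_neg at hc
    have hwn : ⌈g⌉₊ ≤ n - 1 := by
      rcases Nat.lt_or_ge ⌈g⌉₊ n with h | h
      · omega
      · exfalso
        have : (n:ℝ) ≤ (⌈g⌉₊:ℝ) := by exact_mod_cast h
        linarith
    rcases h1 ⌈g⌉₊ hw1 hwn with h | h
    · linarith
    · linarith
  refine ⟨hw1, hw2, han, ?_⟩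
  by_contra hc
  push_neg at hc
  have hw2' : 2 ≤ ⌈g⌉₊ := by
    by_contra h
    have : ⌈g⌉₊ ≤ 1 := by omega
    have : (⌈g⌉₊:ℝ) ≤ 1 := by exact_mod_cast this
    linarith
  rcases h2 ⌈g⌉₊ hw2' hw2 with h | h
  · linarith
  · linarith

lemma mem_translateFam {v : ℝ × ℝ} {F : Set (Set (ℝ × ℝ))} {t : Set (ℝ × ℝ)} (ht : t ∈ F) :
    translateSet v t ∈ translateFam v F := Set.mem_image_of_mem _ ht

-- subset lemmas
section
variable (n k : ℕ) (E : Set (ℕ × ℕ))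

lemma sub1 : (⋃ i ∈ Set.Icc 1 k, ⋃ j ∈ Set.Icc 1 k,
    if i = j then (∅ : Set (Set (ℝ × ℝ)))
    else translateFam (3 * (n : ℝ) * i, 3 * (n : ℝ) * j) (AGadget n E)) ⊆ SPrime n k E := by
  intro x hx; unfold SPrime; simp only [Set.mem_union]; tauto

lemma sub2 : (⋃ i ∈ Set.Icc 1 k, translateFam (3 * (n : ℝ) * i, 3 * (n : ℝ) * i) (DGadget n)) ⊆ SPrime n k E := by
  intro x hx; unfold SPrime; simp only [Set.mem_union]; tauto

lemma sub3 : (⋃ i ∈ Set.Icc 1 k, translateFam (-(3 * (n : ℝ) * i), 3 * (n : ℝ) * i) (ChGadget n)) ⊆ SPrime n k E := by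
  intro x hx; unfold SPrime; simp only [Set.mem_union]; tauto

lemma sub4 : (⋃ i ∈ Set.Icc 1 k, translateFam (3 * (n : ℝ) * i, -(3 * (n : ℝ) * i)) (CvGadget n)) ⊆ SPrime n k E := by
  intro x hx; unfold SPrime; simp only [Set.mem_union]; tauto

lemma sub5 : (⋃ i ∈ Set.Icc 1 k,
    translateFam (-(3 * (n : ℝ) * (k + 1)), 3 * (n : ℝ) * i) (FhGadget n k)) ⊆ SPrime n k E := by
  intro x hx; unfold SPrime; simp only [Set.mem_union]; tauto

lemma sub6 : (⋃ i ∈ Set.Icc 1 k,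
    translateFam (-(3 * (n : ℝ) * (k + 1)), 3 * (n : ℝ) * i + n) (FhGadget n k)) ⊆ SPrime n k E := by
  intro x hx; unfold SPrime; simp only [Set.mem_union]; tauto

lemma sub7 : (⋃ i ∈ Set.Icc 1 k,
    translateFam (3 * (n : ℝ) * i, -(3 * (n : ℝ) * (k + 1))) (FvGadget n k)) ⊆ SPrime n k E := by
  intro x hx; unfold SPrime; simp only [Set.mem_union]; tauto

lemma sub8 : (⋃ i ∈ Set.Icc 1 k,
    translateFam (3 * (n : ℝ) * i + n, -(3 * (n : ℝ) * (k + 1))) (FvGadget n k)) ⊆ SPrime n k E := by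
  intro x hx; unfold SPrime; simp only [Set.mem_union]; tauto

lemma sub9 : (⋃ i ∈ Set.Icc 1 k,
    translateFam (-(3 * (n : ℝ) * i), -(3 * (n : ℝ) * (k + 1))) (FvGadget n k)) ⊆ SPrime n k E := by
  intro x hx; unfold SPrime; simp only [Set.mem_union]; tauto

lemma sub10 : (⋃ i ∈ Set.Icc 1 k,
    translateFam (-(3 * (n : ℝ) * (k + 1)), -(3 * (n : ℝ) * i)) (FhGadget n k)) ⊆ SPrime n k E := by
  intro x hx; unfold SPrime; simp only [Set.mem_union]; tauto

end

section
variable {n k : ℕ} {E : Set (ℕ × ℕ)} {i j u v : ℕ}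

lemma mem_SP_A (hi : i ∈ Set.Icc 1 k) (hj : j ∈ Set.Icc 1 k) (hij : i ≠ j)
    (hu1 : 1 ≤ u) (hu2 : u ≤ n) (hv1 : 1 ≤ v) (hv2 : v ≤ n) (hE : (u, v) ∉ E) :
    translateSet (3 * (n : ℝ) * i, 3 * (n : ℝ) * j) (openSquare ((n:ℝ)-1) (u:ℝ) (v:ℝ)) ∈ SPrime n k E := by
  apply sub1 n k E
  exact Set.mem_biUnion hi (Set.mem_biUnion hj (by
    rw [if_neg hij]; exact mem_translateFam ⟨u, v, hu1, hu2, hv1, hv2, hE, rfl⟩))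

lemma mem_SP_D (hi : i ∈ Set.Icc 1 k)
    (hu1 : 1 ≤ u) (hu2 : u ≤ n) (hv1 : 1 ≤ v) (hv2 : v ≤ n) (huv : u ≠ v) :
    translateSet (3 * (n : ℝ) * i, 3 * (n : ℝ) * i) (openSquare ((n:ℝ)-1) (u:ℝ) (v:ℝ)) ∈ SPrime n k E := by
  apply sub2 n k E
  exact Set.mem_biUnion hi (mem_translateFam ⟨u, v, hu1, hu2, hv1, hv2, huv, rfl⟩)

lemma mem_SP_Ch1 (hi : i ∈ Set.Icc 1 k) (hu1 : 1 ≤ u) (hu2 : u ≤ n - 1) :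
    translateSet (-(3 * (n : ℝ) * i), 3 * (n : ℝ) * i)
      (openSquare ((n:ℝ)-1) (u:ℝ) ((u:ℝ) - n + 1)) ∈ SPrime n k E := by
  apply sub3 n k E
  exact Set.mem_biUnion hi (mem_translateFam (Or.inl ⟨u, hu1, hu2, rfl⟩))

lemma mem_SP_Ch2 (hi : i ∈ Set.Icc 1 k) (hu1 : 2 ≤ u) (hu2 : u ≤ n) :
    translateSet (-(3 * (n : ℝ) * i), 3 * (n : ℝ) * i)
      (openSquare ((n:ℝ)-1) ((u:ℝ) - n) ((n:ℝ) + u - 1)) ∈ SPrime n k E := by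
  apply sub3 n k E
  exact Set.mem_biUnion hi (mem_translateFam (Or.inr ⟨u, hu1, hu2, rfl⟩))

lemma mem_SP_Cv1 (hi : i ∈ Set.Icc 1 k) (hu1 : 1 ≤ u) (hu2 : u ≤ n - 1) :
    translateSet (3 * (n : ℝ) * i, -(3 * (n : ℝ) * i))
      (openSquare ((n:ℝ)-1) ((u:ℝ) - n + 1) (u:ℝ)) ∈ SPrime n k E := by
  apply sub4 n k E
  exact Set.mem_biUnion hi (mem_translateFam (Or.inl ⟨u, hu1, hu2, rfl⟩))

lemma mem_SP_Cv2 (hi : i ∈ Set.Icc 1 k) (hu1 : 2 ≤ u) (hu2 : u ≤ n) :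
    translateSet (3 * (n : ℝ) * i, -(3 * (n : ℝ) * i))
      (openSquare ((n:ℝ)-1) ((n:ℝ) + u - 1) ((u:ℝ) - n)) ∈ SPrime n k E := by
  apply sub4 n k E
  exact Set.mem_biUnion hi (mem_translateFam (Or.inr ⟨u, hu1, hu2, rfl⟩))

lemma mem_SP_F5 (hi : i ∈ Set.Icc 1 k) (hj1 : 1 ≤ j) (hj2 : j ≤ 6 * k + 1) :
    translateSet (-(3 * (n : ℝ) * (k + 1)), 3 * (n : ℝ) * i)
      (openSquare (n:ℝ) (-((j:ℝ) * n)) 0) ∈ SPrime n k E := by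
  apply sub5 n k E
  exact Set.mem_biUnion hi (mem_translateFam ⟨j, hj1, hj2, rfl⟩)

lemma mem_SP_F6 (hi : i ∈ Set.Icc 1 k) (hj1 : 1 ≤ j) (hj2 : j ≤ 6 * k + 1) :
    translateSet (-(3 * (n : ℝ) * (k + 1)), 3 * (n : ℝ) * i + n)
      (openSquare (n:ℝ) (-((j:ℝ) * n)) 0) ∈ SPrime n k E := by
  apply sub6 n k E
  exact Set.mem_biUnion hi (mem_translateFam ⟨j, hj1, hj2, rfl⟩)

lemma mem_SP_F7 (hi : i ∈ Set.Icc 1 k) (hj1 : 1 ≤ j) (hj2 : j ≤ 6 * k + 1) :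
    translateSet (3 * (n : ℝ) * i, -(3 * (n : ℝ) * (k + 1)))
      (openSquare (n:ℝ) 0 (-((j:ℝ) * n))) ∈ SPrime n k E := by
  apply sub7 n k E
  exact Set.mem_biUnion hi (mem_translateFam ⟨j, hj1, hj2, rfl⟩)

lemma mem_SP_F8 (hi : i ∈ Set.Icc 1 k) (hj1 : 1 ≤ j) (hj2 : j ≤ 6 * k + 1) :
    translateSet (3 * (n : ℝ) * i + n, -(3 * (n : ℝ) * (k + 1)))
      (openSquare (n:ℝ) 0 (-((j:ℝ) * n))) ∈ SPrime n k E := by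
  apply sub8 n k E
  exact Set.mem_biUnion hi (mem_translateFam ⟨j, hj1, hj2, rfl⟩)

lemma mem_SP_F9 (hi : i ∈ Set.Icc 1 k) (hj1 : 1 ≤ j) (hj2 : j ≤ 6 * k + 1) :
    translateSet (-(3 * (n : ℝ) * i), -(3 * (n : ℝ) * (k + 1)))
      (openSquare (n:ℝ) 0 (-((j:ℝ) * n))) ∈ SPrime n k E := by
  apply sub9 n k E
  exact Set.mem_biUnion hi (mem_translateFam ⟨j, hj1, hj2, rfl⟩)

lemma mem_SP_F10 (hi : i ∈ Set.Icc 1 k) (hj1 : 1 ≤ j) (hj2 : j ≤ 6 * k + 1) :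
    translateSet (-(3 * (n : ℝ) * (k + 1)), -(3 * (n : ℝ) * i))
      (openSquare (n:ℝ) (-((j:ℝ) * n)) 0) ∈ SPrime n k E := by
  apply sub10 n k E
  exact Set.mem_biUnion hi (mem_translateFam ⟨j, hj1, hj2, rfl⟩)

end

set_option maxHeartbeats 2000000 in
lemma clique_to_stab (n k : ℕ) (hn : 2 ≤ n) (hk : 1 ≤ k)
    (E : Set (ℕ × ℕ)) (C : Finset ℕ) (hCk : C.card = k) (hCsub : (C : Set ℕ) ⊆ Set.Icc 1 n)
    (hCl : ∀ u ∈ C, ∀ v ∈ C, u ≠ v → (u, v) ∈ E) :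
    ∃ L : Finset (Set (ℝ × ℝ)), L.card ≤ 6 * k ∧ (∀ l ∈ L, IsAPLine l) ∧
      ∀ s ∈ SPrime n k E, ∃ l ∈ L, (l ∩ s).Nonempty := by
  classical
  have hN : (2:ℝ) ≤ (n:ℝ) := by exact_mod_cast hn
  -- the clique enumeration
  set w : ℕ → ℕ := fun i => if h : i - 1 < k then ((C.orderIsoOfFin hCk) ⟨i-1, h⟩ : ℕ) else 1
    with hwdef
  have hwC : ∀ i ∈ Set.Icc 1 k, w i ∈ C := by
    intro i hi
    obtain ⟨hi1, hi2⟩ := hi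
    have h : i - 1 < k := by omega
    simp only [hwdef, dif_pos h]
    exact ((C.orderIsoOfFin hCk) ⟨i-1, h⟩).2
  have hwinj : ∀ i ∈ Set.Icc 1 k, ∀ j ∈ Set.Icc 1 k, i ≠ j → w i ≠ w j := by
    intro i hi j hj hij heq
    obtain ⟨hi1, hi2⟩ := hi; obtain ⟨hj1, hj2⟩ := hj
    have h1 : i - 1 < k := by omega
    have h2 : j - 1 < k := by omega
    simp only [hwdef, dif_pos h1, dif_pos h2] at heq
    have := (C.orderIsoOfFin hCk).injective (Subtype.ext heq)
    have : i - 1 = j - 1 := congrArg Fin.val this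
    omega
  have hwn : ∀ i ∈ Set.Icc 1 k, 1 ≤ w i ∧ w i ≤ n := by
    intro i hi
    have := hCsub (hwC i hi)
    simpa using this
  have hedge : ∀ i ∈ Set.Icc 1 k, ∀ j ∈ Set.Icc 1 k, i ≠ j → (w i, w j) ∈ E := by
    intro i hi j hj hij
    exact hCl _ (hwC i hi) _ (hwC j hj) (hwinj i hi j hj hij)
  refine ⟨(Finset.Icc 1 k).biUnion (fun i =>
      {vLine (3 * (n:ℝ) * i + w i - 1/2), vLine (3 * (n:ℝ) * i + (n:ℝ) + w i - 1/2),
       vLine (-(3 * (n:ℝ) * i) + w i - 1/2), hLine (3 * (n:ℝ) * i + w i - 1/2),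
       hLine (3 * (n:ℝ) * i + (n:ℝ) + w i - 1/2), hLine (-(3 * (n:ℝ) * i) + w i - 1/2)}), ?_, ?_, ?_⟩
  · refine le_trans (Finset.card_biUnion_le) ?_
    refine le_trans (Finset.sum_le_card_nsmul _ _ 6 (fun x _ => card_six_le _ _ _ _ _ _)) ?_
    simp [Nat.card_Icc, mul_comm]
  · intro l hl
    simp only [Finset.mem_biUnion, Finset.mem_insert, Finset.mem_singleton] at hl
    obtain ⟨i, _, h⟩ := hl
    rcases h with h|h|h|h|h|h
    all_goals first
      | exact Or.inl ⟨_, h⟩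
      | exact Or.inr ⟨_, h⟩
  · -- the stabbing property
    have hmemIcc : ∀ i, i ∈ Set.Icc 1 k → i ∈ Finset.Icc 1 k := by
      intro i hi; simpa [Finset.mem_Icc] using hi
    have hmv1 : ∀ i ∈ Set.Icc 1 k, vLine (3 * (n:ℝ) * i + w i - 1/2) ∈
        (Finset.Icc 1 k).biUnion (fun i =>
        ({vLine (3 * (n:ℝ) * i + w i - 1/2), vLine (3 * (n:ℝ) * i + (n:ℝ) + w i - 1/2),
         vLine (-(3 * (n:ℝ) * i) + w i - 1/2), hLine (3 * (n:ℝ) * i + w i - 1/2),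
         hLine (3 * (n:ℝ) * i + (n:ℝ) + w i - 1/2), hLine (-(3 * (n:ℝ) * i) + w i - 1/2)} :
           Finset (Set (ℝ × ℝ)))) :=
      fun i hi => Finset.mem_biUnion.mpr ⟨i, hmemIcc i hi, by simp⟩
    have hmv2 : ∀ i ∈ Set.Icc 1 k, vLine (3 * (n:ℝ) * i + (n:ℝ) + w i - 1/2) ∈
        (Finset.Icc 1 k).biUnion (fun i =>
        ({vLine (3 * (n:ℝ) * i + w i - 1/2), vLine (3 * (n:ℝ) * i + (n:ℝ) + w i - 1/2),
         vLine (-(3 * (n:ℝ) * i) + w i - 1/2), hLine (3 * (n:ℝ) * i + w i - 1/2),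
         hLine (3 * (n:ℝ) * i + (n:ℝ) + w i - 1/2), hLine (-(3 * (n:ℝ) * i) + w i - 1/2)} :
           Finset (Set (ℝ × ℝ)))) :=
      fun i hi => Finset.mem_biUnion.mpr ⟨i, hmemIcc i hi, by simp⟩
    have hmv3 : ∀ i ∈ Set.Icc 1 k, vLine (-(3 * (n:ℝ) * i) + w i - 1/2) ∈
        (Finset.Icc 1 k).biUnion (fun i =>
        ({vLine (3 * (n:ℝ) * i + w i - 1/2), vLine (3 * (n:ℝ) * i + (n:ℝ) + w i - 1/2),
         vLine (-(3 * (n:ℝ) * i) + w i - 1/2), hLine (3 * (n:ℝ) * i + w i - 1/2),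
         hLine (3 * (n:ℝ) * i + (n:ℝ) + w i - 1/2), hLine (-(3 * (n:ℝ) * i) + w i - 1/2)} :
           Finset (Set (ℝ × ℝ)))) :=
      fun i hi => Finset.mem_biUnion.mpr ⟨i, hmemIcc i hi, by simp⟩
    have hmh1 : ∀ i ∈ Set.Icc 1 k, hLine (3 * (n:ℝ) * i + w i - 1/2) ∈
        (Finset.Icc 1 k).biUnion (fun i =>
        ({vLine (3 * (n:ℝ) * i + w i - 1/2), vLine (3 * (n:ℝ) * i + (n:ℝ) + w i - 1/2),
         vLine (-(3 * (n:ℝ) * i) + w i - 1/2), hLine (3 * (n:ℝ) * i + w i - 1/2),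
         hLine (3 * (n:ℝ) * i + (n:ℝ) + w i - 1/2), hLine (-(3 * (n:ℝ) * i) + w i - 1/2)} :
           Finset (Set (ℝ × ℝ)))) :=
      fun i hi => Finset.mem_biUnion.mpr ⟨i, hmemIcc i hi, by simp⟩
    have hmh2 : ∀ i ∈ Set.Icc 1 k, hLine (3 * (n:ℝ) * i + (n:ℝ) + w i - 1/2) ∈
        (Finset.Icc 1 k).biUnion (fun i =>
        ({vLine (3 * (n:ℝ) * i + w i - 1/2), vLine (3 * (n:ℝ) * i + (n:ℝ) + w i - 1/2),
         vLine (-(3 * (n:ℝ) * i) + w i - 1/2), hLine (3 * (n:ℝ) * i + w i - 1/2),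
         hLine (3 * (n:ℝ) * i + (n:ℝ) + w i - 1/2), hLine (-(3 * (n:ℝ) * i) + w i - 1/2)} :
           Finset (Set (ℝ × ℝ)))) :=
      fun i hi => Finset.mem_biUnion.mpr ⟨i, hmemIcc i hi, by simp⟩
    have hmh3 : ∀ i ∈ Set.Icc 1 k, hLine (-(3 * (n:ℝ) * i) + w i - 1/2) ∈
        (Finset.Icc 1 k).biUnion (fun i =>
        ({vLine (3 * (n:ℝ) * i + w i - 1/2), vLine (3 * (n:ℝ) * i + (n:ℝ) + w i - 1/2),
         vLine (-(3 * (n:ℝ) * i) + w i - 1/2), hLine (3 * (n:ℝ) * i + w i - 1/2),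
         hLine (3 * (n:ℝ) * i + (n:ℝ) + w i - 1/2), hLine (-(3 * (n:ℝ) * i) + w i - 1/2)} :
           Finset (Set (ℝ × ℝ)))) :=
      fun i hi => Finset.mem_biUnion.mpr ⟨i, hmemIcc i hi, by simp⟩
    intro s hs
    unfold SPrime at hs
    simp only [Set.mem_union] at hs
    rcases hs with (((((((((hs|hs)|hs)|hs)|hs)|hs)|hs)|hs)|hs)|hs)
    -- case A
    · simp only [Set.mem_iUnion, exists_prop] at hs
      obtain ⟨i, hi, j, hj, hs⟩ := hs
      by_cases hij : i = j
      · simp [hij] at hs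
      · rw [if_neg hij] at hs
        obtain ⟨t, ht, rfl⟩ := hs
        obtain ⟨u, v, hu1, hu2, hv1, hv2, hEuv, rfl⟩ := ht
        rw [translateSet_openSquare]
        obtain ⟨hwi1, hwi2⟩ := hwn i hi
        obtain ⟨hwj1, hwj2⟩ := hwn j hj
        have hRwi1 : (1:ℝ) ≤ w i := by exact_mod_cast hwi1
        have hRwi2 : (w i:ℝ) ≤ (n:ℝ) := by exact_mod_cast hwi2
        have hRwj1 : (1:ℝ) ≤ w j := by exact_mod_cast hwj1
        have hRwj2 : (w j:ℝ) ≤ (n:ℝ) := by exact_mod_cast hwj2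
        have hRu1 : (1:ℝ) ≤ u := by exact_mod_cast hu1
        have hRu2 : (u:ℝ) ≤ (n:ℝ) := by exact_mod_cast hu2
        have hRv1 : (1:ℝ) ≤ v := by exact_mod_cast hv1
        have hRv2 : (v:ℝ) ≤ (n:ℝ) := by exact_mod_cast hv2
        have hne : ¬(u = w i ∧ v = w j) := by
          rintro ⟨rfl, rfl⟩
          exact hEuv (hedge i hi j hj hij)
        rcases Nat.lt_trichotomy u (w i) with hu | hu | hu
        · have : (u:ℝ) + 1 ≤ w i := by exact_mod_cast hu
          refine ⟨_, hmv1 i hi, ?_⟩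
          rw [vLine_inter (by linarith)]
          constructor <;> linarith
        · rcases Nat.lt_trichotomy v (w j) with hv | hv | hv
          · have : (v:ℝ) + 1 ≤ w j := by exact_mod_cast hv
            refine ⟨_, hmh1 j hj, ?_⟩
            rw [hLine_inter (by linarith)]
            constructor <;> linarith
          · exact absurd ⟨hu, hv⟩ hne
          · have : (w j:ℝ) + 1 ≤ v := by exact_mod_cast hv
            refine ⟨_, hmh2 j hj, ?_⟩
            rw [hLine_inter (by linarith)]
            constructor <;> linarith
        · have : (w i:ℝ) + 1 ≤ u := by exact_mod_cast hu
          refine ⟨_, hmv2 i hi, ?_⟩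
          rw [vLine_inter (by linarith)]
          constructor <;> linarith
    -- case D
    · simp only [Set.mem_iUnion, exists_prop] at hs
      obtain ⟨i, hi, t, ht, rfl⟩ := hs
      obtain ⟨u, v, hu1, hu2, hv1, hv2, huv, rfl⟩ := ht
      rw [translateSet_openSquare]
      obtain ⟨hwi1, hwi2⟩ := hwn i hi
      have hRwi1 : (1:ℝ) ≤ w i := by exact_mod_cast hwi1
      have hRwi2 : (w i:ℝ) ≤ (n:ℝ) := by exact_mod_cast hwi2
      have hRu1 : (1:ℝ) ≤ u := by exact_mod_cast hu1
      have hRu2 : (u:ℝ) ≤ (n:ℝ) := by exact_mod_cast hu2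
      have hRv1 : (1:ℝ) ≤ v := by exact_mod_cast hv1
      have hRv2 : (v:ℝ) ≤ (n:ℝ) := by exact_mod_cast hv2
      have hne : ¬(u = w i ∧ v = w i) := by rintro ⟨rfl, rfl⟩; exact huv rfl
      rcases Nat.lt_trichotomy u (w i) with hu | hu | hu
      · have : (u:ℝ) + 1 ≤ w i := by exact_mod_cast hu
        refine ⟨_, hmv1 i hi, ?_⟩
        rw [vLine_inter (by linarith)]
        constructor <;> linarith
      · rcases Nat.lt_trichotomy v (w i) with hv | hv | hv
        · have : (v:ℝ) + 1 ≤ w i := by exact_mod_cast hv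
          refine ⟨_, hmh1 i hi, ?_⟩
          rw [hLine_inter (by linarith)]
          constructor <;> linarith
        · exact absurd ⟨hu, hv⟩ hne
        · have : (w i:ℝ) + 1 ≤ v := by exact_mod_cast hv
          refine ⟨_, hmh2 i hi, ?_⟩
          rw [hLine_inter (by linarith)]
          constructor <;> linarith
      · have : (w i:ℝ) + 1 ≤ u := by exact_mod_cast hu
        refine ⟨_, hmv2 i hi, ?_⟩
        rw [vLine_inter (by linarith)]
        constructor <;> linarith
    -- case Ch
    · simp only [Set.mem_iUnion, exists_prop] at hs
      obtain ⟨i, hi, t, ht, rfl⟩ := hs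
      obtain ⟨hwi1, hwi2⟩ := hwn i hi
      have hRwi1 : (1:ℝ) ≤ w i := by exact_mod_cast hwi1
      have hRwi2 : (w i:ℝ) ≤ (n:ℝ) := by exact_mod_cast hwi2
      rcases ht with ⟨u, hu1, hu2, rfl⟩ | ⟨u, hu1, hu2, rfl⟩
      · -- family 1 : x-range (-3Ni + u, ...), y-range (3Ni + u - n + 1, ...)
        have hu2' : u ≤ n - 1 := hu2
        have hRu1 : (1:ℝ) ≤ u := by exact_mod_cast hu1
        have hRu2 : (u:ℝ) ≤ (n:ℝ) - 1 := by
          have : u ≤ n - 1 := hu2'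
          have h2 : (u:ℝ) ≤ (n - 1 : ℕ) := by exact_mod_cast this
          have h3 : ((n-1:ℕ):ℝ) = (n:ℝ) - 1 := by
            have : 1 ≤ n := by omega
            push_cast [Nat.cast_sub this]
            ring
          linarith [h3 ▸ h2]
        rw [translateSet_openSquare]
        rcases Nat.lt_or_ge u (w i) with hu | hu
        · have : (u:ℝ) + 1 ≤ w i := by exact_mod_cast hu
          refine ⟨_, hmv3 i hi, ?_⟩
          rw [vLine_inter (by linarith)]
          constructor <;> linarith
        · have : (w i:ℝ) ≤ u := by exact_mod_cast hu
          refine ⟨_, hmh1 i hi, ?_⟩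
          rw [hLine_inter (by linarith)]
          constructor <;> linarith
      · -- family 2
        have hRu1 : (2:ℝ) ≤ u := by exact_mod_cast hu1
        have hRu2 : (u:ℝ) ≤ (n:ℝ) := by exact_mod_cast hu2
        rw [translateSet_openSquare]
        rcases Nat.lt_or_ge (w i) u with hu | hu
        · have : (w i:ℝ) + 1 ≤ u := by exact_mod_cast hu
          refine ⟨_, hmv3 i hi, ?_⟩
          rw [vLine_inter (by linarith)]
          constructor <;> linarith
        · have : (u:ℝ) ≤ w i := by exact_mod_cast hu
          refine ⟨_, hmh2 i hi, ?_⟩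
          rw [hLine_inter (by linarith)]
          constructor <;> linarith
    -- case Cv
    · simp only [Set.mem_iUnion, exists_prop] at hs
      obtain ⟨i, hi, t, ht, rfl⟩ := hs
      obtain ⟨hwi1, hwi2⟩ := hwn i hi
      have hRwi1 : (1:ℝ) ≤ w i := by exact_mod_cast hwi1
      have hRwi2 : (w i:ℝ) ≤ (n:ℝ) := by exact_mod_cast hwi2
      rcases ht with ⟨u, hu1, hu2, rfl⟩ | ⟨u, hu1, hu2, rfl⟩
      · have hu2' : u ≤ n - 1 := hu2
        have hRu1 : (1:ℝ) ≤ u := by exact_mod_cast hu1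
        have hRu2 : (u:ℝ) ≤ (n:ℝ) - 1 := by
          have h2 : (u:ℝ) ≤ (n - 1 : ℕ) := by exact_mod_cast hu2'
          have h3 : ((n-1:ℕ):ℝ) = (n:ℝ) - 1 := by
            have : 1 ≤ n := by omega
            push_cast [Nat.cast_sub this]
            ring
          linarith [h3 ▸ h2]
        rw [translateSet_openSquare]
        rcases Nat.lt_or_ge u (w i) with hu | hu
        · have : (u:ℝ) + 1 ≤ w i := by exact_mod_cast hu
          refine ⟨_, hmh3 i hi, ?_⟩
          rw [hLine_inter (by linarith)]
          constructor <;> linarith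
        · have : (w i:ℝ) ≤ u := by exact_mod_cast hu
          refine ⟨_, hmv1 i hi, ?_⟩
          rw [vLine_inter (by linarith)]
          constructor <;> linarith
      · have hRu1 : (2:ℝ) ≤ u := by exact_mod_cast hu1
        have hRu2 : (u:ℝ) ≤ (n:ℝ) := by exact_mod_cast hu2
        rw [translateSet_openSquare]
        rcases Nat.lt_or_ge (w i) u with hu | hu
        · have : (w i:ℝ) + 1 ≤ u := by exact_mod_cast hu
          refine ⟨_, hmh3 i hi, ?_⟩
          rw [hLine_inter (by linarith)]
          constructor <;> linarith
        · have : (u:ℝ) ≤ w i := by exact_mod_cast hu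
          refine ⟨_, hmv2 i hi, ?_⟩
          rw [vLine_inter (by linarith)]
          constructor <;> linarith
    -- forcing gadgets
    all_goals (
      simp only [Set.mem_iUnion, exists_prop] at hs
      obtain ⟨i, hi, t, ht, rfl⟩ := hs
      obtain ⟨j, hj1, hj2, rfl⟩ := ht
      obtain ⟨hwi1, hwi2⟩ := hwn i hi
      have hRwi1 : (1:ℝ) ≤ w i := by exact_mod_cast hwi1
      have hRwi2 : (w i:ℝ) ≤ (n:ℝ) := by exact_mod_cast hwi2
      rw [translateSet_openSquare])
    · refine ⟨_, hmh1 i hi, ?_⟩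
      rw [hLine_inter (by linarith)]
      constructor <;> linarith
    · refine ⟨_, hmh2 i hi, ?_⟩
      rw [hLine_inter (by linarith)]
      constructor <;> linarith
    · refine ⟨_, hmv1 i hi, ?_⟩
      rw [vLine_inter (by linarith)]
      constructor <;> linarith
    · refine ⟨_, hmv2 i hi, ?_⟩
      rw [vLine_inter (by linarith)]
      constructor <;> linarith
    · refine ⟨_, hmv3 i hi, ?_⟩
      rw [vLine_inter (by linarith)]
      constructor <;> linarith
    · refine ⟨_, hmh3 i hi, ?_⟩
      rw [hLine_inter (by linarith)]
      constructor <;> linarith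

set_option maxHeartbeats 2000000 in
lemma stab_to_clique (n k : ℕ) (hn : 2 ≤ n) (hk : 1 ≤ k)
    (E : Set (ℕ × ℕ)) (hloops : ∀ u, (u, u) ∉ E)
    (L : Finset (Set (ℝ × ℝ))) (hcard : L.card ≤ 6 * k) (hAP : ∀ l ∈ L, IsAPLine l)
    (hstab : ∀ s ∈ SPrime n k E, ∃ l ∈ L, (l ∩ s).Nonempty) :
    ∃ C : Finset ℕ, C.card = k ∧ (C : Set ℕ) ⊆ Set.Icc 1 n ∧
      ∀ u ∈ C, ∀ v ∈ C, u ≠ v → (u, v) ∈ E := by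
  classical
  have hn1 : 1 ≤ n := by omega
  have hN : (2:ℝ) ≤ (n:ℝ) := by exact_mod_cast hn
  have hn0 : (0:ℝ) ≤ (n:ℝ) := by linarith
  -- choose the strip lines
  have hxA0 : ∀ i : ℕ, ∃ c, 1 ≤ i → i ≤ k →
      vLine c ∈ L ∧ 3*(n:ℝ)*i < c ∧ c < 3*(n:ℝ)*i + n := by
    intro i
    by_cases hi : 1 ≤ i ∧ i ≤ k
    · obtain ⟨c, h1, h2, h3⟩ := exists_vLine_in_strip hn1 hcard hAP
        (3*(n:ℝ)*i) (-(3*(n:ℝ)*(k+1)))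
        (fun j hj1 hj2 => hstab _ (mem_SP_F7 hi hj1 hj2))
      exact ⟨c, fun _ _ => ⟨h1, h2, h3⟩⟩
    · exact ⟨0, fun h1 h2 => absurd ⟨h1, h2⟩ hi⟩
  choose xA hxA using hxA0
  have hxB0 : ∀ i : ℕ, ∃ c, 1 ≤ i → i ≤ k →
      vLine c ∈ L ∧ 3*(n:ℝ)*i + n < c ∧ c < 3*(n:ℝ)*i + n + n := by
    intro i
    by_cases hi : 1 ≤ i ∧ i ≤ k
    · obtain ⟨c, h1, h2, h3⟩ := exists_vLine_in_strip hn1 hcard hAP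
        (3*(n:ℝ)*i + n) (-(3*(n:ℝ)*(k+1)))
        (fun j hj1 hj2 => hstab _ (mem_SP_F8 hi hj1 hj2))
      exact ⟨c, fun _ _ => ⟨h1, h2, h3⟩⟩
    · exact ⟨0, fun h1 h2 => absurd ⟨h1, h2⟩ hi⟩
  choose xB hxB using hxB0
  have hxC0 : ∀ i : ℕ, ∃ c, 1 ≤ i → i ≤ k →
      vLine c ∈ L ∧ -(3*(n:ℝ)*i) < c ∧ c < -(3*(n:ℝ)*i) + n := by
    intro i
    by_cases hi : 1 ≤ i ∧ i ≤ k
    · obtain ⟨c, h1, h2, h3⟩ := exists_vLine_in_strip hn1 hcard hAP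
        (-(3*(n:ℝ)*i)) (-(3*(n:ℝ)*(k+1)))
        (fun j hj1 hj2 => hstab _ (mem_SP_F9 hi hj1 hj2))
      exact ⟨c, fun _ _ => ⟨h1, h2, h3⟩⟩
    · exact ⟨0, fun h1 h2 => absurd ⟨h1, h2⟩ hi⟩
  choose xC hxC using hxC0
  have hyA0 : ∀ i : ℕ, ∃ c, 1 ≤ i → i ≤ k →
      hLine c ∈ L ∧ 3*(n:ℝ)*i < c ∧ c < 3*(n:ℝ)*i + n := by
    intro i
    by_cases hi : 1 ≤ i ∧ i ≤ k
    · obtain ⟨c, h1, h2, h3⟩ := exists_hLine_in_strip hn1 hcard hAP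
        (-(3*(n:ℝ)*(k+1))) (3*(n:ℝ)*i)
        (fun j hj1 hj2 => hstab _ (mem_SP_F5 hi hj1 hj2))
      exact ⟨c, fun _ _ => ⟨h1, h2, h3⟩⟩
    · exact ⟨0, fun h1 h2 => absurd ⟨h1, h2⟩ hi⟩
  choose yA hyA using hyA0
  have hyB0 : ∀ i : ℕ, ∃ c, 1 ≤ i → i ≤ k →
      hLine c ∈ L ∧ 3*(n:ℝ)*i + n < c ∧ c < 3*(n:ℝ)*i + n + n := by
    intro i
    by_cases hi : 1 ≤ i ∧ i ≤ k
    · obtain ⟨c, h1, h2, h3⟩ := exists_hLine_in_strip hn1 hcard hAP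
        (-(3*(n:ℝ)*(k+1))) (3*(n:ℝ)*i + n)
        (fun j hj1 hj2 => hstab _ (mem_SP_F6 hi hj1 hj2))
      exact ⟨c, fun _ _ => ⟨h1, h2, h3⟩⟩
    · exact ⟨0, fun h1 h2 => absurd ⟨h1, h2⟩ hi⟩
  choose yB hyB using hyB0
  have hyC0 : ∀ i : ℕ, ∃ c, 1 ≤ i → i ≤ k →
      hLine c ∈ L ∧ -(3*(n:ℝ)*i) < c ∧ c < -(3*(n:ℝ)*i) + n := by
    intro i
    by_cases hi : 1 ≤ i ∧ i ≤ k
    · obtain ⟨c, h1, h2, h3⟩ := exists_hLine_in_strip hn1 hcard hAP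
        (-(3*(n:ℝ)*(k+1))) (-(3*(n:ℝ)*i))
        (fun j hj1 hj2 => hstab _ (mem_SP_F10 hi hj1 hj2))
      exact ⟨c, fun _ _ => ⟨h1, h2, h3⟩⟩
    · exact ⟨0, fun h1 h2 => absurd ⟨h1, h2⟩ hi⟩
  choose yC hyC using hyC0
  -- the designated line family
  set ξ : ℕ → ℕ → ℝ := fun i t =>
    if t = 0 then xA i else if t = 1 then xB i else if t = 2 then xC i
    else if t = 3 then yA i else if t = 4 then yB i else yC i with hξdef
  set Φ : ℕ × ℕ → Set (ℝ × ℝ) := fun p =>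
    if p.2 < 3 then vLine (ξ p.1 p.2) else hLine (ξ p.1 p.2) with hΦdef
  have hξb : ∀ i, 1 ≤ i → i ≤ k → ∀ t, t < 6 →
      offR (n:ℝ) i (t % 3) < ξ i t ∧ ξ i t < offR (n:ℝ) i (t % 3) + n := by
    intro i h1 h2 t ht
    have HA := hxA i h1 h2
    have HB := hxB i h1 h2
    have HC := hxC i h1 h2
    have HD := hyA i h1 h2
    have HE := hyB i h1 h2
    have HF := hyC i h1 h2
    interval_cases t <;>
      simp only [hξdef, offR] <;> norm_num <;>
      (try constructor) <;>
      linarith [HA.2.1, HA.2.2, HB.2.1, HB.2.2, HC.2.1, HC.2.2,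
        HD.2.1, HD.2.2, HE.2.1, HE.2.2, HF.2.1, HF.2.2]
  have hkey : ∀ i t j s, 1 ≤ i → i ≤ k → t < 6 → 1 ≤ j → j ≤ k → s < 6 →
      ξ i t = ξ j s → i = j ∧ t % 3 = s % 3 := by
    intro i t j s hi1 hik ht hj1 hjk hs heq
    have h1 := hξb i hi1 hik t ht
    have h2 := hξb j hj1 hjk s hs
    exact offset_eq hN hi1 hj1 (Nat.mod_lt _ (by norm_num)) (Nat.mod_lt _ (by norm_num))
      h1.1 h1.2 h2.1 h2.2 heq
  have hinj : Set.InjOn Φ ↑(Finset.Icc 1 k ×ˢ Finset.range 6) := by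
    rintro ⟨i, t⟩ hit ⟨j, s⟩ hjs heq
    simp only [Finset.coe_product, Set.mem_prod, Finset.mem_coe, Finset.mem_Icc,
      Finset.mem_range] at hit hjs
    obtain ⟨⟨hi1, hik⟩, ht⟩ := hit
    obtain ⟨⟨hj1, hjk⟩, hs⟩ := hjs
    by_cases ht3 : t < 3 <;> by_cases hs3 : s < 3 <;>
      simp only [hΦdef, ht3, hs3, if_pos, if_neg, if_true, if_false, reduceIte] at heq
    · obtain ⟨hij, hts⟩ := hkey i t j s hi1 hik ht hj1 hjk hs (vLine_inj heq)
      simp only [Prod.mk.injEq]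
      exact ⟨hij, by omega⟩
    · exact absurd heq (vLine_ne_hLine _ _)
    · exact absurd heq.symm (vLine_ne_hLine _ _)
    · obtain ⟨hij, hts⟩ := hkey i t j s hi1 hik ht hj1 hjk hs (hLine_inj heq)
      simp only [Prod.mk.injEq]
      exact ⟨hij, by omega⟩
  have hsub : (Finset.Icc 1 k ×ˢ Finset.range 6).image Φ ⊆ L := by
    intro l hl
    simp only [Finset.mem_image] at hl
    obtain ⟨⟨i, t⟩, hmem, rfl⟩ := hl
    simp only [Finset.mem_product, Finset.mem_Icc, Finset.mem_range] at hmem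
    obtain ⟨⟨hi1, hik⟩, ht⟩ := hmem
    interval_cases t <;> simp only [hΦdef, hξdef] <;> norm_num <;>
      first
      | exact (hxA i hi1 hik).1
      | exact (hxB i hi1 hik).1
      | exact (hxC i hi1 hik).1
      | exact (hyA i hi1 hik).1
      | exact (hyB i hi1 hik).1
      | exact (hyC i hi1 hik).1
  have hcardL0 : ((Finset.Icc 1 k ×ˢ Finset.range 6).image Φ).card = 6 * k := by
    rw [Finset.card_image_of_injOn hinj, Finset.card_product, Nat.card_Icc, Finset.card_range]
    omega
  have hLL0 : (Finset.Icc 1 k ×ˢ Finset.range 6).image Φ = L :=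
    Finset.eq_of_subset_of_card_le hsub (by omega)
  have hform : ∀ l ∈ L, ∃ j, (1 ≤ j ∧ j ≤ k) ∧
      (l = vLine (xA j) ∨ l = vLine (xB j) ∨ l = vLine (xC j) ∨
       l = hLine (yA j) ∨ l = hLine (yB j) ∨ l = hLine (yC j)) := by
    intro l hl
    rw [← hLL0] at hl
    simp only [Finset.mem_image] at hl
    obtain ⟨⟨j, t⟩, hmem, rfl⟩ := hl
    simp only [Finset.mem_product, Finset.mem_Icc, Finset.mem_range] at hmem
    obtain ⟨⟨hj1, hjk⟩, ht⟩ := hmem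
    refine ⟨j, ⟨hj1, hjk⟩, ?_⟩
    interval_cases t <;> simp only [hΦdef, hξdef] <;> norm_num <;> tauto
  have hside : (0:ℝ) < (n:ℝ) - 1 := by linarith
  have hstab' : ∀ (vx vy X Y : ℝ),
      translateSet (vx, vy) (openSquare ((n:ℝ)-1) X Y) ∈ SPrime n k E →
      ∃ j, (1 ≤ j ∧ j ≤ k) ∧
        ((X + vx < xA j ∧ xA j < X + vx + ((n:ℝ)-1)) ∨
         (X + vx < xB j ∧ xB j < X + vx + ((n:ℝ)-1)) ∨
         (X + vx < xC j ∧ xC j < X + vx + ((n:ℝ)-1)) ∨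
         (Y + vy < yA j ∧ yA j < Y + vy + ((n:ℝ)-1)) ∨
         (Y + vy < yB j ∧ yB j < Y + vy + ((n:ℝ)-1)) ∨
         (Y + vy < yC j ∧ yC j < Y + vy + ((n:ℝ)-1))) := by
    intro vx vy X Y hmem
    obtain ⟨l, hl, hne⟩ := hstab _ hmem
    rw [translateSet_openSquare'] at hne
    obtain ⟨j, hj, hcase⟩ := hform l hl
    refine ⟨j, hj, ?_⟩
    rcases hcase with rfl | rfl | rfl | rfl | rfl | rfl
    · rw [vLine_inter hside] at hne; exact Or.inl hne
    · rw [vLine_inter hside] at hne; exact Or.inr (Or.inl hne)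
    · rw [vLine_inter hside] at hne; exact Or.inr (Or.inr (Or.inl hne))
    · rw [hLine_inter hside] at hne; exact Or.inr (Or.inr (Or.inr (Or.inl hne)))
    · rw [hLine_inter hside] at hne; exact Or.inr (Or.inr (Or.inr (Or.inr (Or.inl hne))))
    · rw [hLine_inter hside] at hne; exact Or.inr (Or.inr (Or.inr (Or.inr (Or.inr hne))))
  -- the D-gadget constraint
  have hD : ∀ i, 1 ≤ i → i ≤ k → ∀ u v : ℕ, 1 ≤ u → u ≤ n → 1 ≤ v → v ≤ n → u ≠ v →
      ((u:ℝ) + 3*(n:ℝ)*i < xA i) ∨ (xB i < (u:ℝ) + 3*(n:ℝ)*i + ((n:ℝ)-1)) ∨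
      ((v:ℝ) + 3*(n:ℝ)*i < yA i) ∨ (yB i < (v:ℝ) + 3*(n:ℝ)*i + ((n:ℝ)-1)) := by
    intro i hi1 hik u v hu1 hun hv1 hvn huv
    obtain ⟨j, ⟨hj1, hjk⟩, hcase⟩ := hstab' (3*(n:ℝ)*i) (3*(n:ℝ)*i) u v
      (mem_SP_D ⟨hi1, hik⟩ hu1 hun hv1 hvn huv)
    have hu1R : (1:ℝ) ≤ u := by exact_mod_cast hu1
    have hunR : (u:ℝ) ≤ n := by exact_mod_cast hun
    have hv1R : (1:ℝ) ≤ v := by exact_mod_cast hv1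
    have hvnR : (v:ℝ) ≤ n := by exact_mod_cast hvn
    have hgi := mul3_ge hn0 hi1
    have hgj := mul3_ge hn0 hj1
    rcases hcase with h | h | h | h | h | h
    · have hb := (hxA j hj1 hjk).2
      have hij : j = i := by
        rcases Nat.lt_trichotomy j i with hlt | he | hlt
        · exact absurd (mul3_step hn0 hlt) (by push_neg; linarith [h.1, hb.2])
        · exact he
        · exact absurd (mul3_step hn0 hlt) (by push_neg; linarith [h.2, hb.1])
      subst hij
      exact Or.inl h.1
    · have hb := (hxB j hj1 hjk).2
      have hij : j = i := by
        rcases Nat.lt_trichotomy j i with hlt | he | hlt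
        · exact absurd (mul3_step hn0 hlt) (by push_neg; linarith [h.1, hb.2])
        · exact he
        · exact absurd (mul3_step hn0 hlt) (by push_neg; linarith [h.2, hb.1])
      subst hij
      exact Or.inr (Or.inl h.2)
    · have hb := (hxC j hj1 hjk).2
      exact absurd h.1 (by push_neg; linarith [hb.2])
    · have hb := (hyA j hj1 hjk).2
      have hij : j = i := by
        rcases Nat.lt_trichotomy j i with hlt | he | hlt
        · exact absurd (mul3_step hn0 hlt) (by push_neg; linarith [h.1, hb.2])
        · exact he
        · exact absurd (mul3_step hn0 hlt) (by push_neg; linarith [h.2, hb.1])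
      subst hij
      exact Or.inr (Or.inr (Or.inl h.1))
    · have hb := (hyB j hj1 hjk).2
      have hij : j = i := by
        rcases Nat.lt_trichotomy j i with hlt | he | hlt
        · exact absurd (mul3_step hn0 hlt) (by push_neg; linarith [h.1, hb.2])
        · exact he
        · exact absurd (mul3_step hn0 hlt) (by push_neg; linarith [h.2, hb.1])
      subst hij
      exact Or.inr (Or.inr (Or.inr h.2))
    · have hb := (hyC j hj1 hjk).2
      exact absurd h.1 (by push_neg; linarith [hb.2])
  -- the A-gadget constraint
  have hA : ∀ i j, 1 ≤ i → i ≤ k → 1 ≤ j → j ≤ k → i ≠ j →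
      ∀ u v : ℕ, 1 ≤ u → u ≤ n → 1 ≤ v → v ≤ n → (u, v) ∉ E →
      ((u:ℝ) + 3*(n:ℝ)*i < xA i) ∨ (xB i < (u:ℝ) + 3*(n:ℝ)*i + ((n:ℝ)-1)) ∨
      ((v:ℝ) + 3*(n:ℝ)*j < yA j) ∨ (yB j < (v:ℝ) + 3*(n:ℝ)*j + ((n:ℝ)-1)) := by
    intro i j hi1 hik hj1 hjk hij u v hu1 hun hv1 hvn huv
    obtain ⟨p, ⟨hp1, hpk⟩, hcase⟩ := hstab' (3*(n:ℝ)*i) (3*(n:ℝ)*j) u v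
      (mem_SP_A ⟨hi1, hik⟩ ⟨hj1, hjk⟩ hij hu1 hun hv1 hvn huv)
    have hu1R : (1:ℝ) ≤ u := by exact_mod_cast hu1
    have hunR : (u:ℝ) ≤ n := by exact_mod_cast hun
    have hv1R : (1:ℝ) ≤ v := by exact_mod_cast hv1
    have hvnR : (v:ℝ) ≤ n := by exact_mod_cast hvn
    have hgi := mul3_ge hn0 hi1
    have hgj := mul3_ge hn0 hj1
    have hgp := mul3_ge hn0 hp1
    rcases hcase with h | h | h | h | h | h
    · have hb := (hxA p hp1 hpk).2
      have hpi : p = i := by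
        rcases Nat.lt_trichotomy p i with hlt | he | hlt
        · exact absurd (mul3_step hn0 hlt) (by push_neg; linarith [h.1, hb.2])
        · exact he
        · exact absurd (mul3_step hn0 hlt) (by push_neg; linarith [h.2, hb.1])
      subst hpi
      exact Or.inl h.1
    · have hb := (hxB p hp1 hpk).2
      have hpi : p = i := by
        rcases Nat.lt_trichotomy p i with hlt | he | hlt
        · exact absurd (mul3_step hn0 hlt) (by push_neg; linarith [h.1, hb.2])
        · exact he
        · exact absurd (mul3_step hn0 hlt) (by push_neg; linarith [h.2, hb.1])
      subst hpi
      exact Or.inr (Or.inl h.2)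
    · have hb := (hxC p hp1 hpk).2
      exact absurd h.1 (by push_neg; linarith [hb.2])
    · have hb := (hyA p hp1 hpk).2
      have hpj : p = j := by
        rcases Nat.lt_trichotomy p j with hlt | he | hlt
        · exact absurd (mul3_step hn0 hlt) (by push_neg; linarith [h.1, hb.2])
        · exact he
        · exact absurd (mul3_step hn0 hlt) (by push_neg; linarith [h.2, hb.1])
      subst hpj
      exact Or.inr (Or.inr (Or.inl h.1))
    · have hb := (hyB p hp1 hpk).2
      have hpj : p = j := by
        rcases Nat.lt_trichotomy p j with hlt | he | hlt
        · exact absurd (mul3_step hn0 hlt) (by push_neg; linarith [h.1, hb.2])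
        · exact he
        · exact absurd (mul3_step hn0 hlt) (by push_neg; linarith [h.2, hb.1])
      subst hpj
      exact Or.inr (Or.inr (Or.inr h.2))
    · have hb := (hyC p hp1 hpk).2
      exact absurd h.1 (by push_neg; linarith [hb.2])
  -- the C_v gadget constraints
  have hCv1 : ∀ i, 1 ≤ i → i ≤ k → ∀ m : ℕ, 1 ≤ m → m ≤ n - 1 →
      (xA i < (m:ℝ) + 3*(n:ℝ)*i) ∨ ((m:ℝ) - 3*(n:ℝ)*i < yC i) := by
    intro i hi1 hik m hm1 hmn
    obtain ⟨p, ⟨hp1, hpk⟩, hcase⟩ := hstab' (3*(n:ℝ)*i) (-(3*(n:ℝ)*i)) ((m:ℝ) - n + 1) m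
      (mem_SP_Cv1 ⟨hi1, hik⟩ hm1 hmn)
    have hm1R : (1:ℝ) ≤ m := by exact_mod_cast hm1
    have hmnR : (m:ℝ) ≤ (n:ℝ) - 1 := by
      have h' : m + 1 ≤ n := by omega
      have : (m:ℝ) + 1 ≤ n := by exact_mod_cast h'
      linarith
    have hgi := mul3_ge hn0 hi1
    have hgp := mul3_ge hn0 hp1
    rcases hcase with h | h | h | h | h | h
    · have hb := (hxA p hp1 hpk).2
      have hpi : p = i := by
        rcases Nat.lt_trichotomy p i with hlt | he | hlt
        · exact absurd (mul3_step hn0 hlt) (by push_neg; linarith [h.1, hb.2])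
        · exact he
        · exact absurd (mul3_step hn0 hlt) (by push_neg; linarith [h.2, hb.1])
      subst hpi
      exact Or.inl (by linarith [h.2])
    · have hb := (hxB p hp1 hpk).2
      rcases Nat.lt_or_ge p i with hlt | hge
      · exact absurd (mul3_step hn0 hlt) (by push_neg; linarith [h.1, hb.2])
      · exact absurd (mul3_mono hn0 hge) (by push_neg; linarith [h.2, hb.1])
    · have hb := (hxC p hp1 hpk).2
      exact absurd h.1 (by push_neg; linarith [hb.2])
    · have hb := (hyA p hp1 hpk).2
      exact absurd h.2 (by push_neg; linarith [hb.1])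
    · have hb := (hyB p hp1 hpk).2
      exact absurd h.2 (by push_neg; linarith [hb.1])
    · have hb := (hyC p hp1 hpk).2
      have hpi : p = i := by
        rcases Nat.lt_trichotomy p i with hlt | he | hlt
        · exact absurd (mul3_step hn0 hlt) (by push_neg; linarith [h.2, hb.1])
        · exact he
        · exact absurd (mul3_step hn0 hlt) (by push_neg; linarith [h.1, hb.2])
      subst hpi
      exact Or.inr (by linarith [h.1])
  have hCv2 : ∀ i, 1 ≤ i → i ≤ k → ∀ m : ℕ, 2 ≤ m → m ≤ n →
      ((n:ℝ) + m - 1 + 3*(n:ℝ)*i < xB i) ∨ (yC i < (m:ℝ) - 1 - 3*(n:ℝ)*i) := by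
    intro i hi1 hik m hm2 hmn
    obtain ⟨p, ⟨hp1, hpk⟩, hcase⟩ := hstab' (3*(n:ℝ)*i) (-(3*(n:ℝ)*i)) ((n:ℝ) + m - 1) ((m:ℝ) - n)
      (mem_SP_Cv2 ⟨hi1, hik⟩ hm2 hmn)
    have hm2R : (2:ℝ) ≤ m := by exact_mod_cast hm2
    have hmnR : (m:ℝ) ≤ n := by exact_mod_cast hmn
    have hgi := mul3_ge hn0 hi1
    have hgp := mul3_ge hn0 hp1
    rcases hcase with h | h | h | h | h | h
    · have hb := (hxA p hp1 hpk).2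
      rcases Nat.lt_or_ge i p with hlt | hge
      · exact absurd (mul3_step hn0 hlt) (by push_neg; linarith [h.2, hb.1])
      · exact absurd (mul3_mono hn0 hge) (by push_neg; linarith [h.1, hb.2])
    · have hb := (hxB p hp1 hpk).2
      have hpi : p = i := by
        rcases Nat.lt_trichotomy p i with hlt | he | hlt
        · exact absurd (mul3_step hn0 hlt) (by push_neg; linarith [h.1, hb.2])
        · exact he
        · exact absurd (mul3_step hn0 hlt) (by push_neg; linarith [h.2, hb.1])
      subst hpi
      exact Or.inl h.1
    · have hb := (hxC p hp1 hpk).2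
      exact absurd h.1 (by push_neg; linarith [hb.2])
    · have hb := (hyA p hp1 hpk).2
      exact absurd h.2 (by push_neg; linarith [hb.1])
    · have hb := (hyB p hp1 hpk).2
      exact absurd h.2 (by push_neg; linarith [hb.1])
    · have hb := (hyC p hp1 hpk).2
      have hpi : p = i := by
        rcases Nat.lt_trichotomy p i with hlt | he | hlt
        · exact absurd (mul3_step hn0 hlt) (by push_neg; linarith [h.2, hb.1])
        · exact he
        · exact absurd (mul3_step hn0 hlt) (by push_neg; linarith [h.1, hb.2])
      subst hpi
      exact Or.inr (by linarith [h.2])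
  -- the C_h gadget constraints
  have hCh1 : ∀ i, 1 ≤ i → i ≤ k → ∀ m : ℕ, 1 ≤ m → m ≤ n - 1 →
      (yA i < (m:ℝ) + 3*(n:ℝ)*i) ∨ ((m:ℝ) - 3*(n:ℝ)*i < xC i) := by
    intro i hi1 hik m hm1 hmn
    obtain ⟨p, ⟨hp1, hpk⟩, hcase⟩ := hstab' (-(3*(n:ℝ)*i)) (3*(n:ℝ)*i) m ((m:ℝ) - n + 1)
      (mem_SP_Ch1 ⟨hi1, hik⟩ hm1 hmn)
    have hm1R : (1:ℝ) ≤ m := by exact_mod_cast hm1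
    have hmnR : (m:ℝ) ≤ (n:ℝ) - 1 := by
      have h' : m + 1 ≤ n := by omega
      have : (m:ℝ) + 1 ≤ n := by exact_mod_cast h'
      linarith
    have hgi := mul3_ge hn0 hi1
    have hgp := mul3_ge hn0 hp1
    rcases hcase with h | h | h | h | h | h
    · have hb := (hxA p hp1 hpk).2
      exact absurd h.2 (by push_neg; linarith [hb.1])
    · have hb := (hxB p hp1 hpk).2
      exact absurd h.2 (by push_neg; linarith [hb.1])
    · have hb := (hxC p hp1 hpk).2
      have hpi : p = i := by
        rcases Nat.lt_trichotomy p i with hlt | he | hlt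
        · exact absurd (mul3_step hn0 hlt) (by push_neg; linarith [h.2, hb.1])
        · exact he
        · exact absurd (mul3_step hn0 hlt) (by push_neg; linarith [h.1, hb.2])
      subst hpi
      exact Or.inr (by linarith [h.1])
    · have hb := (hyA p hp1 hpk).2
      have hpi : p = i := by
        rcases Nat.lt_trichotomy p i with hlt | he | hlt
        · exact absurd (mul3_step hn0 hlt) (by push_neg; linarith [h.1, hb.2])
        · exact he
        · exact absurd (mul3_step hn0 hlt) (by push_neg; linarith [h.2, hb.1])
      subst hpi
      exact Or.inl (by linarith [h.2])
    · have hb := (hyB p hp1 hpk).2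
      rcases Nat.lt_or_ge p i with hlt | hge
      · exact absurd (mul3_step hn0 hlt) (by push_neg; linarith [h.1, hb.2])
      · exact absurd (mul3_mono hn0 hge) (by push_neg; linarith [h.2, hb.1])
    · have hb := (hyC p hp1 hpk).2
      exact absurd h.1 (by push_neg; linarith [hb.2])
  have hCh2 : ∀ i, 1 ≤ i → i ≤ k → ∀ m : ℕ, 2 ≤ m → m ≤ n →
      ((n:ℝ) + m - 1 + 3*(n:ℝ)*i < yB i) ∨ (xC i < (m:ℝ) - 1 - 3*(n:ℝ)*i) := by
    intro i hi1 hik m hm2 hmn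
    obtain ⟨p, ⟨hp1, hpk⟩, hcase⟩ := hstab' (-(3*(n:ℝ)*i)) (3*(n:ℝ)*i) ((m:ℝ) - n) ((n:ℝ) + m - 1)
      (mem_SP_Ch2 ⟨hi1, hik⟩ hm2 hmn)
    have hm2R : (2:ℝ) ≤ m := by exact_mod_cast hm2
    have hmnR : (m:ℝ) ≤ n := by exact_mod_cast hmn
    have hgi := mul3_ge hn0 hi1
    have hgp := mul3_ge hn0 hp1
    rcases hcase with h | h | h | h | h | h
    · have hb := (hxA p hp1 hpk).2
      exact absurd h.2 (by push_neg; linarith [hb.1])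
    · have hb := (hxB p hp1 hpk).2
      exact absurd h.2 (by push_neg; linarith [hb.1])
    · have hb := (hxC p hp1 hpk).2
      have hpi : p = i := by
        rcases Nat.lt_trichotomy p i with hlt | he | hlt
        · exact absurd (mul3_step hn0 hlt) (by push_neg; linarith [h.2, hb.1])
        · exact he
        · exact absurd (mul3_step hn0 hlt) (by push_neg; linarith [h.1, hb.2])
      subst hpi
      exact Or.inr (by linarith [h.2])
    · have hb := (hyA p hp1 hpk).2
      rcases Nat.lt_or_ge i p with hlt | hge
      · exact absurd (mul3_step hn0 hlt) (by push_neg; linarith [h.2, hb.1])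
      · exact absurd (mul3_mono hn0 hge) (by push_neg; linarith [h.1, hb.2])
    · have hb := (hyB p hp1 hpk).2
      have hpi : p = i := by
        rcases Nat.lt_trichotomy p i with hlt | he | hlt
        · exact absurd (mul3_step hn0 hlt) (by push_neg; linarith [h.1, hb.2])
        · exact he
        · exact absurd (mul3_step hn0 hlt) (by push_neg; linarith [h.2, hb.1])
      subst hpi
      exact Or.inl h.1
    · have hb := (hyC p hp1 hpk).2
      exact absurd h.1 (by push_neg; linarith [hb.2])
  -- the gap vertices
  have hWv : ∀ i, 1 ≤ i → i ≤ k →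
      1 ≤ ⌈yC i + 3*(n:ℝ)*i⌉₊ ∧ ⌈yC i + 3*(n:ℝ)*i⌉₊ ≤ n ∧
      xA i - 3*(n:ℝ)*i ≤ (⌈yC i + 3*(n:ℝ)*i⌉₊:ℝ) ∧
      (⌈yC i + 3*(n:ℝ)*i⌉₊:ℝ) ≤ (xB i - 3*(n:ℝ)*i - n) + 1 := by
    intro i hi1 hik
    have hA' := hxA i hi1 hik
    have hB' := hxB i hi1 hik
    have hC' := hyC i hi1 hik
    refine ceil_gap hn (by linarith [hC'.2.1]) (by linarith [hC'.2.2])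
      (by linarith [hB'.2.1]) (by linarith [hA'.2.2]) ?_ ?_
    · intro m hm1 hmn
      rcases hCv1 i hi1 hik m hm1 hmn with h | h
      · exact Or.inl (by linarith)
      · exact Or.inr (by linarith)
    · intro m hm2 hmn
      rcases hCv2 i hi1 hik m hm2 hmn with h | h
      · exact Or.inl (by linarith)
      · exact Or.inr (by linarith)
  have hWh : ∀ i, 1 ≤ i → i ≤ k →
      1 ≤ ⌈xC i + 3*(n:ℝ)*i⌉₊ ∧ ⌈xC i + 3*(n:ℝ)*i⌉₊ ≤ n ∧
      yA i - 3*(n:ℝ)*i ≤ (⌈xC i + 3*(n:ℝ)*i⌉₊:ℝ) ∧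
      (⌈xC i + 3*(n:ℝ)*i⌉₊:ℝ) ≤ (yB i - 3*(n:ℝ)*i - n) + 1 := by
    intro i hi1 hik
    have hA' := hyA i hi1 hik
    have hB' := hyB i hi1 hik
    have hC' := hxC i hi1 hik
    refine ceil_gap hn (by linarith [hC'.2.1]) (by linarith [hC'.2.2])
      (by linarith [hB'.2.1]) (by linarith [hA'.2.2]) ?_ ?_
    · intro m hm1 hmn
      rcases hCh1 i hi1 hik m hm1 hmn with h | h
      · exact Or.inl (by linarith)
      · exact Or.inr (by linarith)
    · intro m hm2 hmn
      rcases hCh2 i hi1 hik m hm2 hmn with h | h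
      · exact Or.inl (by linarith)
      · exact Or.inr (by linarith)
  set W : ℕ → ℕ := fun i => ⌈yC i + 3*(n:ℝ)*i⌉₊ with hWdef
  set W' : ℕ → ℕ := fun i => ⌈xC i + 3*(n:ℝ)*i⌉₊ with hW'def
  have hWeq : ∀ i, 1 ≤ i → i ≤ k → W i = W' i := by
    intro i hi1 hik
    by_contra hne
    obtain ⟨hw1, hwn, hwa, hwb⟩ := hWv i hi1 hik
    obtain ⟨hw1', hwn', hwa', hwb'⟩ := hWh i hi1 hik
    rcases hD i hi1 hik (W i) (W' i) hw1 hwn hw1' hwn' hne with h | h | h | h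
    · linarith
    · linarith
    · linarith
    · linarith
  have hWedge : ∀ i j, 1 ≤ i → i ≤ k → 1 ≤ j → j ≤ k → i ≠ j → (W i, W j) ∈ E := by
    intro i j hi1 hik hj1 hjk hij
    by_contra hne
    obtain ⟨hw1, hwn, hwa, hwb⟩ := hWv i hi1 hik
    obtain ⟨hw1', hwn', hwa', hwb'⟩ := hWh j hj1 hjk
    have heq := hWeq j hj1 hjk
    rcases hA i j hi1 hik hj1 hjk hij (W i) (W j) hw1 hwn
        (heq ▸ hw1') (heq ▸ hwn') hne with h | h | h | h
    · linarith
    · linarith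
    · rw [heq] at h; linarith
    · rw [heq] at h; linarith
  refine ⟨(Finset.Icc 1 k).image W, ?_, ?_, ?_⟩
  · rw [Finset.card_image_of_injOn, Nat.card_Icc]
    · omega
    · intro i hi j hj hWij
      simp only [Finset.coe_Icc, Set.mem_Icc] at hi hj
      by_contra hij
      have h1 := hWedge i j hi.1 hi.2 hj.1 hj.2 hij
      rw [hWij] at h1
      exact hloops _ h1
  · intro x hx
    simp only [Finset.coe_image, Set.mem_image, Finset.mem_coe, Finset.mem_Icc] at hx
    obtain ⟨i, ⟨hi1, hik⟩, rfl⟩ := hx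
    obtain ⟨hw1, hwn, _, _⟩ := hWv i hi1 hik
    exact ⟨hw1, hwn⟩
  · intro u hu v hv huv
    simp only [Finset.mem_image, Finset.mem_Icc] at hu hv
    obtain ⟨i, ⟨hi1, hik⟩, rfl⟩ := hu
    obtain ⟨j, ⟨hj1, hjk⟩, rfl⟩ := hv
    have hij : i ≠ j := by rintro rfl; exact huv rfl
    exact hWedge i j hi1 hik hj1 hjk hij

/-- `S'(G, k)` can be stabbed by `6k` axis-parallel lines iff `G` has a `k`-clique. -/
theorem sPrime_stabbable_iff_clique (n k : ℕ) (hn : 2 ≤ n) (hk : 1 ≤ k)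
    (E : Set (ℕ × ℕ)) (hE : E ⊆ Set.Icc 1 n ×ˢ Set.Icc 1 n)
    (hloops : ∀ u, (u, u) ∉ E) :
    (∃ L : Finset (Set (ℝ × ℝ)), L.card ≤ 6 * k ∧ (∀ l ∈ L, IsAPLine l) ∧
      ∀ s ∈ SPrime n k E, ∃ l ∈ L, (l ∩ s).Nonempty) ↔
    (∃ C : Finset ℕ, C.card = k ∧ (C : Set ℕ) ⊆ Set.Icc 1 n ∧
      ∀ u ∈ C, ∀ v ∈ C, u ≠ v → (u, v) ∈ E) := by
  constructor
  · rintro ⟨L, h1, h2, h3⟩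
    exact stab_to_clique n k hn hk E hloops L h1 h2 h3
  · rintro ⟨C, h1, h2, h3⟩
    exact clique_to_stab n k hn hk E C h1 h2 h3
end

section
/- Let S be a nonempty finite family of open axis-parallel unit squares in ℝ² that is δ-robust for some δ > 0, and suppose S can be stabbed by k axis-parallel lines. Let τ, σ ≥ 0 with τ + σ < δ, and for each square □_1(x_s, y_s) ∈ S choose reals t_s, t'_s with |t_s| ≤ τ and |t'_s| ≤ τ. Then the modified family {□_{1−2σ}(x_s + t_s + σ, y_s + t'_s + σ) : s ∈ S}, obtained by translating each square by at most τ in each coordinate and shrinking it by σ from each side, can also be stabbed by k axis-parallel lines. -/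
/-- A finite family of open axis-parallel squares of side `l`, given by the finset `S`
of their lower-left corners, is `δ`-robust if for every nonempty subfamily and each
coordinate, a nonempty intersection of the projections has diameter at least `2δ`. -/
def IsRobust (δ l : ℝ) (S : Finset (ℝ × ℝ)) : Prop :=
  ∀ R ⊆ S, R.Nonempty →
    ((⋂ r ∈ (R : Set (ℝ × ℝ)), Set.Ioo r.1 (r.1 + l)).Nonempty →
      2 * δ ≤ Metric.diam (⋂ r ∈ (R : Set (ℝ × ℝ)), Set.Ioo r.1 (r.1 + l))) ∧
    ((⋂ r ∈ (R : Set (ℝ × ℝ)), Set.Ioo r.2 (r.2 + l)).Nonempty →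
      2 * δ ≤ Metric.diam (⋂ r ∈ (R : Set (ℝ × ℝ)), Set.Ioo r.2 (r.2 + l)))


private lemma key_coord (δ τ σ : ℝ) (hτ : 0 ≤ τ) (hts : τ + σ < δ)
    (R : Finset (ℝ × ℝ)) (hR : R.Nonempty) (f : ℝ × ℝ → ℝ) (c : ℝ)
    (hc : ∀ r ∈ R, c ∈ Set.Ioo (f r) (f r + 1))
    (hdiam : (⋂ r ∈ (R : Set (ℝ × ℝ)), Set.Ioo (f r) (f r + 1)).Nonempty →
      2 * δ ≤ Metric.diam (⋂ r ∈ (R : Set (ℝ × ℝ)), Set.Ioo (f r) (f r + 1))) :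
    ∃ c', ∀ r ∈ R, ∀ u, |u| ≤ τ →
      f r + u + σ < c' ∧ c' < f r + u + σ + (1 - 2 * σ) := by
  set M := R.sup' hR f with hM
  set m := R.inf' hR (fun r => f r + 1) with hm
  have hcI : c ∈ ⋂ r ∈ (R : Set (ℝ × ℝ)), Set.Ioo (f r) (f r + 1) := by
    simp only [Set.mem_iInter]
    intro r hr
    exact hc r hr
  have hMc : M < c := (Finset.sup'_lt_iff hR).2 fun r hr => (hc r hr).1
  have hcm : c < m := (Finset.lt_inf'_iff hR).2 fun r hr => (hc r hr).2
  have hsub : (⋂ r ∈ (R : Set (ℝ × ℝ)), Set.Ioo (f r) (f r + 1)) ⊆ Set.Ioo M m := by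
    intro p hp
    simp only [Set.mem_iInter] at hp
    constructor
    · exact (Finset.sup'_lt_iff hR).2 fun r hr => (hp r hr).1
    · exact (Finset.lt_inf'_iff hR).2 fun r hr => (hp r hr).2
  have hd : 2 * δ ≤ m - M := by
    have h1 := hdiam ⟨c, hcI⟩
    have h2 : Metric.diam (⋂ r ∈ (R : Set (ℝ × ℝ)), Set.Ioo (f r) (f r + 1))
        ≤ Metric.diam (Set.Ioo M m) := Metric.diam_mono hsub (Metric.isBounded_Ioo M m)
    rw [Real.diam_Ioo (le_of_lt (hMc.trans hcm))] at h2
    linarith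
  refine ⟨(M + m) / 2, fun r hr u hu => ?_⟩
  have h1 : f r ≤ M := Finset.le_sup' f hr
  have h2 : m ≤ f r + 1 := Finset.inf'_le (fun r => f r + 1) hr
  have h3 : -τ ≤ u := neg_le_of_abs_le hu
  have h4 : u ≤ τ := le_of_abs_le hu
  constructor <;> [nlinarith; nlinarith]

/-- A `δ`-robust family of unit squares stabbable by `k` axis-parallel lines remains
stabbable by `k` axis-parallel lines after translating each square by at most `τ` in
each coordinate and shrinking it by `σ` from each side, provided `τ + σ < δ`. -/
theorem robust_stab_preserved (δ : ℝ) (hδ : 0 < δ)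
    (S : Finset (ℝ × ℝ)) (hS : S.Nonempty) (hrob : IsRobust δ 1 S)
    (k : ℕ) (L : Finset (Set (ℝ × ℝ))) (hL : ∀ l ∈ L, IsAPLine l) (hLcard : L.card ≤ k)
    (hstab : ∀ s ∈ S, ∃ l ∈ L, (l ∩ openSquare 1 s.1 s.2).Nonempty)
    (τ σ : ℝ) (hτ : 0 ≤ τ) (hσ : 0 ≤ σ) (hts : τ + σ < δ)
    (t t' : ℝ × ℝ → ℝ) (ht : ∀ s ∈ S, |t s| ≤ τ) (ht' : ∀ s ∈ S, |t' s| ≤ τ) :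
    ∃ L' : Finset (Set (ℝ × ℝ)), L'.card ≤ k ∧ (∀ l ∈ L', IsAPLine l) ∧
      ∀ s ∈ S, ∃ l ∈ L',
        (l ∩ openSquare (1 - 2 * σ) (s.1 + t s + σ) (s.2 + t' s + σ)).Nonempty := by
  classical
  -- σ < 1/2, from 2δ ≤ 1 (singleton robustness)
  obtain ⟨s₀, hs₀⟩ := hS
  have h2δ : 2 * δ ≤ 1 := by
    have h := (hrob {s₀} (Finset.singleton_subset_iff.2 hs₀) ⟨s₀, Finset.mem_singleton_self s₀⟩).1
    have heq : (⋂ r ∈ (({s₀} : Finset (ℝ × ℝ)) : Set (ℝ × ℝ)), Set.Ioo r.1 (r.1 + 1))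
        = Set.Ioo s₀.1 (s₀.1 + 1) := by
      simp
    rw [heq] at h
    have := h ⟨s₀.1 + 1/2, by constructor <;> linarith⟩
    rw [Real.diam_Ioo (by linarith)] at this
    linarith
  have hσhalf : σ < 1/2 := by linarith
  -- for each line l in L, a replacement line
  have hrep : ∀ l ∈ L, ∃ l', IsAPLine l' ∧ ∀ s ∈ S,
      (l ∩ openSquare 1 s.1 s.2).Nonempty →
      (l' ∩ openSquare (1 - 2 * σ) (s.1 + t s + σ) (s.2 + t' s + σ)).Nonempty := by
    intro l hl
    set R := S.filter (fun s => (l ∩ openSquare 1 s.1 s.2).Nonempty) with hRdef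
    by_cases hR : R.Nonempty
    swap
    · refine ⟨l, hL l hl, fun s hs hst => absurd ?_ hR⟩
      exact ⟨s, Finset.mem_filter.2 ⟨hs, hst⟩⟩
    have hRsub : R ⊆ S := Finset.filter_subset _ _
    have hrobR := hrob R hRsub hR
    rcases hL l hl with ⟨c, rfl⟩ | ⟨c, rfl⟩
    · -- vertical line
      have hc : ∀ r ∈ R, c ∈ Set.Ioo r.1 (r.1 + 1) := by
        intro r hr
        obtain ⟨p, hp1, hp2⟩ := (Finset.mem_filter.1 hr).2
        have h1 : p.1 = c := hp1
        have := hp2.1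
        rwa [h1] at this
      obtain ⟨c', hc'⟩ := key_coord δ τ σ hτ hts R hR Prod.fst c hc hrobR.1
      refine ⟨vLine c', Or.inl ⟨c', rfl⟩, fun s hs hst => ?_⟩
      have hsR : s ∈ R := Finset.mem_filter.2 ⟨hs, hst⟩
      obtain ⟨h1, h2⟩ := hc' s hsR (t s) (ht s hs)
      refine ⟨(c', s.2 + t' s + σ + (1 - 2 * σ)/2), rfl, ⟨h1, h2⟩, ?_, ?_⟩ <;> simp <;> linarith
    · -- horizontal line
      have hc : ∀ r ∈ R, c ∈ Set.Ioo r.2 (r.2 + 1) := by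
        intro r hr
        obtain ⟨p, hp1, hp2⟩ := (Finset.mem_filter.1 hr).2
        have h1 : p.2 = c := hp1
        have := hp2.2
        rwa [h1] at this
      obtain ⟨c', hc'⟩ := key_coord δ τ σ hτ hts R hR Prod.snd c hc hrobR.2
      refine ⟨hLine c', Or.inr ⟨c', rfl⟩, fun s hs hst => ?_⟩
      have hsR : s ∈ R := Finset.mem_filter.2 ⟨hs, hst⟩
      obtain ⟨h1, h2⟩ := hc' s hsR (t' s) (ht' s hs)
      refine ⟨(s.1 + t s + σ + (1 - 2 * σ)/2, c'), rfl, ⟨?_, ?_⟩, h1, h2⟩ <;> simp <;> linarith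
  choose g hg1 hg2 using hrep
  refine ⟨L.attach.image (fun l => g l.1 l.2), ?_, ?_, ?_⟩
  · calc (L.attach.image (fun l => g l.1 l.2)).card ≤ L.attach.card := Finset.card_image_le
      _ = L.card := Finset.card_attach
      _ ≤ k := hLcard
  · intro l' hl'
    obtain ⟨⟨l, hl⟩, _, rfl⟩ := Finset.mem_image.1 hl'
    exact hg1 l hl
  · intro s hs
    obtain ⟨l, hl, hst⟩ := hstab s hs
    exact ⟨g l hl, Finset.mem_image.2 ⟨⟨l, hl⟩, Finset.mem_attach _ _, rfl⟩, hg2 l hl s hs hst⟩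
end

section
/- Let N ≥ 1 be an integer, let 0 < u < 1, let x₀, y₀ ∈ ℝ, and consider the N open squares s_i = □_u(x₀ + i, y₀) for i = 1,…,N (squares of side u whose lower-left corners lie at unit horizontal spacing on a common horizontal level). Let ℓ = {(x, y) ∈ ℝ² : a·x + b·y = c} be a line with a ≠ 0. Then ℓ intersects at most ⌈|b/a|⌉ + 1 of the squares s_1,…,s_N. -/
/-- If every element of a set of naturals lies in a real open interval of length
at most `K + 1`, then the set has at most `K + 1` elements. -/
lemma aux_card_of_interval (S : Set ℕ) (K : ℕ) (α β : ℝ) (hlen : β - α ≤ K + 1)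
    (h : ∀ i ∈ S, α < (i : ℝ) ∧ (i : ℝ) < β) : S.ncard ≤ K + 1 := by
  rcases S.eq_empty_or_nonempty with rfl | hne
  · simp
  · have hn0 : sInf S ∈ S := Nat.sInf_mem hne
    have hsub : S ⊆ ↑(Finset.Icc (sInf S) (sInf S + K)) := by
      intro i hi
      simp only [Finset.coe_Icc, Set.mem_Icc]
      refine ⟨Nat.sInf_le hi, ?_⟩
      have h1 := h i hi
      have h2 := h _ hn0
      have hlt : (i : ℝ) < ((sInf S + (K + 1) : ℕ) : ℝ) := by push_cast; linarith [h1.2, h2.1]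
      have : i < sInf S + (K + 1) := by exact_mod_cast hlt
      omega
    calc S.ncard ≤ (Finset.Icc (sInf S) (sInf S + K) : Set ℕ).ncard :=
          Set.ncard_le_ncard hsub (Finset.finite_toSet _)
      _ = K + 1 := by rw [Set.ncard_coe_finset, Nat.card_Icc]; omega

/-- A line `a·x + b·y = c` with `a ≠ 0` intersects at most `⌈|b/a|⌉ + 1` of the `N`
squares `□_u(x₀ + i, y₀)`, `i = 1, …, N`, of side `u < 1` lying at unit horizontal
spacing on a common horizontal level. -/
theorem line_stabs_few_forcing_squares (N : ℕ) (hN : 1 ≤ N) (u : ℝ)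
    (hu0 : 0 < u) (hu1 : u < 1) (x0 y0 a b c : ℝ) (ha : a ≠ 0) :
    {i : ℕ | 1 ≤ i ∧ i ≤ N ∧
        ({p : ℝ × ℝ | a * p.1 + b * p.2 = c} ∩
          openSquare u (x0 + i) y0).Nonempty}.ncard ≤ ⌈|b / a|⌉₊ + 1 := by
  set d : ℝ := b / a with hd
  set m : ℝ := min (c / a - d * y0 - x0) (c / a - d * (y0 + u) - x0) with hm
  set M : ℝ := max (c / a - d * y0 - x0) (c / a - d * (y0 + u) - x0) with hM
  apply aux_card_of_interval _ _ (m - u) M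
  · have h1 : M - m = |d| * u := by
      rw [hM, hm, max_sub_min_eq_abs]
      have : (c / a - d * y0 - x0) - (c / a - d * (y0 + u) - x0) = d * u := by ring
      rw [abs_sub_comm, this, abs_mul, abs_of_pos hu0]
    have h2 : |d| ≤ (⌈|b / a|⌉₊ : ℝ) := by rw [← hd]; exact Nat.le_ceil _
    have h3 : |d| * u ≤ |d| := by nlinarith [abs_nonneg d]
    push_cast
    linarith
  · rintro i ⟨hi1, hiN, p, hp1, hp2⟩
    simp only [openSquare, Set.mem_prod, Set.mem_Ioo] at hp2
    simp only [Set.mem_setOf_eq] at hp1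
    have hx : p.1 = c / a - d * p.2 + x0 - x0 := by
      rw [hd]; field_simp; linarith
    have hy1 := hp2.2.1
    have hy2 := hp2.2.2
    have hvm : m ≤ c / a - d * p.2 - x0 := by
      rcases le_total d 0 with h | h
      · exact le_trans (min_le_left _ _) (by nlinarith)
      · exact le_trans (min_le_right _ _) (by nlinarith)
    have hvM : c / a - d * p.2 - x0 ≤ M := by
      rcases le_total d 0 with h | h
      · exact le_trans (by nlinarith) (le_max_right _ _)
      · exact le_trans (by nlinarith) (le_max_left _ _)
    constructor
    · have := hp2.1.2; rw [hx] at this; linarith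
    · have := hp2.1.1; rw [hx] at this; linarith
end

section
/- Let S be a finite family of pairwise disjoint closed axis-parallel unit squares in ℝ², let k ≥ 0, and let T ⊆ S be a subfamily of at least k+1 squares all having the same lower-left x-coordinate. Let T' ⊆ T be any subfamily with exactly k+1 squares. Then S can be stabbed by k axis-parallel lines if and only if (S \ T) ∪ T' can be stabbed by k axis-parallel lines. (The analogous statement holds for squares sharing the same lower-left y-coordinate.) -/
/-- The closed axis-parallel unit square with lower-left corner `(x, y)`. -/
def closedSquare (x y : ℝ) : Set (ℝ × ℝ) := Set.Icc x (x + 1) ×ˢ Set.Icc y (y + 1)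

/-- The family of closed unit squares with corners in `S` can be stabbed by `k`
axis-parallel lines. -/
def StabbableAP (k : ℕ) (S : Finset (ℝ × ℝ)) : Prop :=
  ∃ L : Finset (Set (ℝ × ℝ)), L.card ≤ k ∧ (∀ l ∈ L, IsAPLine l) ∧
    ∀ s ∈ S, ∃ l ∈ L, (l ∩ closedSquare s.1 s.2).Nonempty

lemma vline_inter (c x y : ℝ) :
    (vLine c ∩ closedSquare x y).Nonempty ↔ c ∈ Set.Icc x (x + 1) := by
  constructor
  · rintro ⟨p, hp1, hp2⟩
    simp only [vLine, Set.mem_setOf_eq] at hp1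
    simp only [closedSquare, Set.mem_prod, Set.mem_Icc] at hp2
    exact hp1 ▸ ⟨hp2.1.1, hp2.1.2⟩
  · intro hc
    refine ⟨(c, y), rfl, ?_⟩
    simp only [closedSquare, Set.mem_prod, Set.mem_Icc]
    exact ⟨⟨hc.1, hc.2⟩, le_refl y, by linarith⟩

lemma hline_inter (c x y : ℝ) :
    (hLine c ∩ closedSquare x y).Nonempty ↔ c ∈ Set.Icc y (y + 1) := by
  constructor
  · rintro ⟨p, hp1, hp2⟩
    simp only [hLine, Set.mem_setOf_eq] at hp1
    simp only [closedSquare, Set.mem_prod, Set.mem_Icc] at hp2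
    exact hp1 ▸ ⟨hp2.2.1, hp2.2.2⟩
  · intro hc
    refine ⟨(x, c), rfl, ?_⟩
    simp only [closedSquare, Set.mem_prod, Set.mem_Icc]
    exact ⟨⟨le_refl x, by linarith⟩, hc.1, hc.2⟩

/-- Data reduction: if `T ⊆ S` consists of at least `k+1` pairwise disjoint unit squares
all sharing the same lower-left `x`-coordinate (or all sharing the same lower-left
`y`-coordinate) and `T' ⊆ T` has exactly `k+1` squares, then `S` can be stabbed by `k`
axis-parallel lines iff `(S \ T) ∪ T'` can. -/
theorem data_reduction (k : ℕ) (S : Finset (ℝ × ℝ))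
    (hdisj : ∀ s ∈ S, ∀ s' ∈ S, s ≠ s' →
      Disjoint (closedSquare s.1 s.2) (closedSquare s'.1 s'.2))
    (T T' : Finset (ℝ × ℝ)) (hTS : T ⊆ S) (x0 : ℝ)
    (hsame : (∀ s ∈ T, s.1 = x0) ∨ (∀ s ∈ T, s.2 = x0))
    (hTcard : k + 1 ≤ T.card) (hT' : T' ⊆ T) (hT'card : T'.card = k + 1) :
    StabbableAP k S ↔ StabbableAP k ((S \ T) ∪ T') := by
  have hsub : (S \ T) ∪ T' ⊆ S := by
    intro s hs
    rcases Finset.mem_union.1 hs with h | h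
    · exact (Finset.mem_sdiff.1 h).1
    · exact hTS (hT' h)
  constructor
  · rintro ⟨L, h1, h2, h3⟩
    exact ⟨L, h1, h2, fun s hs => h3 s (hsub hs)⟩
  · rintro ⟨L, h1, h2, h3⟩
    have h3' : ∀ s ∈ T', ∃ l ∈ L, (l ∩ closedSquare s.1 s.2).Nonempty :=
      fun s hs => h3 s (Finset.mem_union_right _ hs)
    -- choose a total stabbing function
    have h4 : ∀ s : ℝ × ℝ, ∃ l, s ∈ T' → l ∈ L ∧ (l ∩ closedSquare s.1 s.2).Nonempty := by
      intro s
      by_cases hs : s ∈ T'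
      · obtain ⟨l, hl, hl'⟩ := h3' s hs
        exact ⟨l, fun _ => ⟨hl, hl'⟩⟩
      · exact ⟨∅, fun h => absurd h hs⟩
    choose f hf using h4
    rcases hsame with hX | hY
    · by_cases hv : ∃ c ∈ Set.Icc x0 (x0 + 1), vLine c ∈ L
      · obtain ⟨c, hc, hcL⟩ := hv
        refine ⟨L, h1, h2, fun s hs => ?_⟩
        by_cases hsT : s ∈ T
        · exact ⟨vLine c, hcL, (vline_inter c s.1 s.2).2 (by rw [hX s hsT]; exact hc)⟩
        · exact h3 s (Finset.mem_union_left _ (Finset.mem_sdiff.2 ⟨hs, hsT⟩))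
      · exfalso
        obtain ⟨s, hs, s', hs', hne, heq⟩ :=
          Finset.exists_ne_map_eq_of_card_lt_of_maps_to
            (by omega : L.card < T'.card) (fun s hs => (hf s hs).1)
        have hst1 := (hf s hs).2
        have hst2 := (hf s' hs').2
        rw [heq] at hst1
        rcases h2 _ ((hf s' hs').1) with ⟨c, hc⟩ | ⟨c, hc⟩
        · rw [hc] at hst2
          have := (vline_inter c s'.1 s'.2).1 hst2
          rw [hX s' (hT' hs')] at this
          exact hv ⟨c, this, hc ▸ (hf s' hs').1⟩
        · rw [hc] at hst1 hst2
          have h1' := (hline_inter c s.1 s.2).1 hst1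
          have h2' := (hline_inter c s'.1 s'.2).1 hst2
          have hd := hdisj s (hTS (hT' hs)) s' (hTS (hT' hs')) hne
          have hp1 : (x0, c) ∈ closedSquare s.1 s.2 := by
            simp only [closedSquare, Set.mem_prod, Set.mem_Icc, hX s (hT' hs)]
            exact ⟨⟨le_refl x0, by linarith⟩, h1'.1, h1'.2⟩
          have hp2 : (x0, c) ∈ closedSquare s'.1 s'.2 := by
            simp only [closedSquare, Set.mem_prod, Set.mem_Icc, hX s' (hT' hs')]
            exact ⟨⟨le_refl x0, by linarith⟩, h2'.1, h2'.2⟩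
          exact Set.disjoint_left.1 hd hp1 hp2
    · by_cases hv : ∃ c ∈ Set.Icc x0 (x0 + 1), hLine c ∈ L
      · obtain ⟨c, hc, hcL⟩ := hv
        refine ⟨L, h1, h2, fun s hs => ?_⟩
        by_cases hsT : s ∈ T
        · exact ⟨hLine c, hcL, (hline_inter c s.1 s.2).2 (by rw [hY s hsT]; exact hc)⟩
        · exact h3 s (Finset.mem_union_left _ (Finset.mem_sdiff.2 ⟨hs, hsT⟩))
      · exfalso
        obtain ⟨s, hs, s', hs', hne, heq⟩ :=
          Finset.exists_ne_map_eq_of_card_lt_of_maps_to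
            (by omega : L.card < T'.card) (fun s hs => (hf s hs).1)
        have hst1 := (hf s hs).2
        have hst2 := (hf s' hs').2
        rw [heq] at hst1
        rcases h2 _ ((hf s' hs').1) with ⟨c, hc⟩ | ⟨c, hc⟩
        · rw [hc] at hst1 hst2
          have h1' := (vline_inter c s.1 s.2).1 hst1
          have h2' := (vline_inter c s'.1 s'.2).1 hst2
          have hd := hdisj s (hTS (hT' hs)) s' (hTS (hT' hs')) hne
          have hp1 : (c, x0) ∈ closedSquare s.1 s.2 := by
            simp only [closedSquare, Set.mem_prod, Set.mem_Icc, hY s (hT' hs)]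
            exact ⟨⟨h1'.1, h1'.2⟩, le_refl x0, by linarith⟩
          have hp2 : (c, x0) ∈ closedSquare s'.1 s'.2 := by
            simp only [closedSquare, Set.mem_prod, Set.mem_Icc, hY s' (hT' hs')]
            exact ⟨⟨h2'.1, h2'.2⟩, le_refl x0, by linarith⟩
          exact Set.disjoint_left.1 hd hp1 hp2
        · rw [hc] at hst2
          have := (hline_inter c s'.1 s'.2).1 hst2
          rw [hY s' (hT' hs')] at this
          exact hv ⟨c, this, hc ▸ (hf s' hs').1⟩
end

section
/- Let S be a finite family of pairwise disjoint closed axis-parallel unit squares in ℝ², let ℓ be a horizontal line, and let I(ℓ) = {s ∈ S : s ∩ ℓ ≠ ∅}. Suppose |I(ℓ)| > k for some integer k ≥ 0. If L is a set of at most k axis-parallel lines that stabs S, then L contains a horizontal line that intersects at least two squares of I(ℓ). -/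
/-- If a horizontal line meets more than `k` of the pairwise disjoint unit squares of
`S`, then any set of at most `k` axis-parallel lines stabbing `S` contains a horizontal
line meeting at least two of those squares. -/
theorem horizontal_line_needed (S : Finset (ℝ × ℝ))
    (hdisj : ∀ s ∈ S, ∀ s' ∈ S, s ≠ s' →
      Disjoint (closedSquare s.1 s.2) (closedSquare s'.1 s'.2))
    (yl : ℝ) (k : ℕ)
    (hbig : k < {s ∈ (S : Set (ℝ × ℝ)) |
        (hLine yl ∩ closedSquare s.1 s.2).Nonempty}.ncard)
    (L : Finset (Set (ℝ × ℝ))) (hL : ∀ l ∈ L, IsAPLine l) (hcard : L.card ≤ k)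
    (hstab : ∀ s ∈ S, ∃ l ∈ L, (l ∩ closedSquare s.1 s.2).Nonempty) :
    ∃ c : ℝ, hLine c ∈ L ∧ ∃ s ∈ S, ∃ s' ∈ S, s ≠ s' ∧
      (hLine yl ∩ closedSquare s.1 s.2).Nonempty ∧
      (hLine yl ∩ closedSquare s'.1 s'.2).Nonempty ∧
      (hLine c ∩ closedSquare s.1 s.2).Nonempty ∧
      (hLine c ∩ closedSquare s'.1 s'.2).Nonempty := by
  classical
  set T : Finset (ℝ × ℝ) :=
    S.filter (fun s => (hLine yl ∩ closedSquare s.1 s.2).Nonempty) with hT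
  have hTset : {s ∈ (S : Set (ℝ × ℝ)) |
      (hLine yl ∩ closedSquare s.1 s.2).Nonempty} = (T : Set (ℝ × ℝ)) := by
    ext s; simp [hT]
  rw [hTset, Set.ncard_coe_finset] at hbig
  have hTmem : ∀ s ∈ T, s ∈ S ∧ (hLine yl ∩ closedSquare s.1 s.2).Nonempty := by
    intro s hs; simpa [hT] using hs
  -- choose a stabbing line for each square
  choose f hfL hfmeet using fun s (hs : s ∈ S) => hstab s hs
  set g : ℝ × ℝ → Set (ℝ × ℝ) := fun s => if h : s ∈ S then f s h else ∅ with hg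
  have hgL : ∀ s ∈ T, g s ∈ L := by
    intro s hs
    have h := (hTmem s hs).1
    simp only [hg, dif_pos h]; exact hfL s h
  have hgmeet : ∀ s ∈ T, (g s ∩ closedSquare s.1 s.2).Nonempty := by
    intro s hs
    have h := (hTmem s hs).1
    simp only [hg, dif_pos h]; exact hfmeet s h
  -- pigeonhole
  have hLT : L.card < T.card := lt_of_le_of_lt hcard hbig
  obtain ⟨s, hs, s', hs', hne, heq⟩ :=
    Finset.exists_ne_map_eq_of_card_lt_of_maps_to hLT hgL
  obtain ⟨hsS, hsyl⟩ := hTmem s hs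
  obtain ⟨hs'S, hs'yl⟩ := hTmem s' hs'
  rcases hL (g s) (hgL s hs) with ⟨c, hc⟩ | ⟨c, hc⟩
  · -- vertical line: contradiction
    exfalso
    obtain ⟨p, hpl, hpsq⟩ := hgmeet s hs
    obtain ⟨p', hpl', hpsq'⟩ := by
      have := hgmeet s' hs'; rwa [← heq] at this
    rw [hc] at hpl hpl'
    have hpc : p.1 = c := hpl
    have hpc' : p'.1 = c := hpl'
    have hq : (c, yl) ∈ closedSquare s.1 s.2 := by
      obtain ⟨q, hql, hqsq⟩ := hsyl
      exact ⟨hpc ▸ hpsq.1, hql ▸ hqsq.2⟩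
    have hq' : (c, yl) ∈ closedSquare s'.1 s'.2 := by
      obtain ⟨q, hql, hqsq⟩ := hs'yl
      exact ⟨hpc' ▸ hpsq'.1, hql ▸ hqsq.2⟩
    exact Set.disjoint_left.mp (hdisj s hsS s' hs'S hne) hq hq'
  · exact ⟨c, hc ▸ hgL s hs, s, hsS, s', hs'S, hne, hsyl, hs'yl,
      hc ▸ hgmeet s hs, hc ▸ heq ▸ hgmeet s' hs'⟩
end

section
/- Let k ≥ 0 and let S be a finite family of pairwise disjoint closed axis-parallel unit squares in ℝ² such that for every real x₀ at most k+1 squares of S have lower-left x-coordinate equal to x₀, and for every real y₀ at most k+1 squares of S have lower-left y-coordinate equal to y₀. If there exists an axis-parallel line ℓ with |I(ℓ)| > 2k+1, then there exists an axis-parallel line ℓ* parallel to ℓ with k+1 ≤ |I(ℓ*)| ≤ 2k+1. -/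
open Classical in
/-- Core combinatorial lemma: a sweep argument on a real-valued coordinate. -/
lemma core_sweep (k : ℕ) {α : Type*} (S : Finset α) (f : α → ℝ)
    (hmult : ∀ x0 : ℝ, (S.filter (fun s => f s = x0)).card ≤ k + 1) :
    ∀ (n : ℕ) (t : ℝ), (S.filter (fun s => t - 1 ≤ f s)).card ≤ n →
      k + 1 ≤ (S.filter (fun s => t - 1 ≤ f s ∧ f s ≤ t)).card →
      ∃ t' : ℝ, k + 1 ≤ (S.filter (fun s => t' - 1 ≤ f s ∧ f s ≤ t')).card ∧
        (S.filter (fun s => t' - 1 ≤ f s ∧ f s ≤ t')).card ≤ 2 * k + 1 := by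
  intro n
  induction n with
  | zero =>
    intro t hn hk
    have hsub : S.filter (fun s => t - 1 ≤ f s ∧ f s ≤ t) ⊆
        S.filter (fun s => t - 1 ≤ f s) :=
      by intro s hs
         rw [Finset.mem_filter] at hs ⊢
         exact ⟨hs.1, hs.2.1⟩
    have := Finset.card_le_card hsub
    omega
  | succ n ih =>
    intro t hn hk
    by_cases hle : (S.filter (fun s => t - 1 ≤ f s ∧ f s ≤ t)).card ≤ 2 * k + 1
    · exact ⟨t, hk, hle⟩
    · push_neg at hle
      set A := S.filter (fun s => t - 1 ≤ f s ∧ f s ≤ t) with hA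
      have hAne : A.Nonempty := Finset.card_pos.mp (by omega)
      have himgne : (A.image f).Nonempty := hAne.image f
      set a := (A.image f).min' himgne with ha
      have hamem : a ∈ A.image f := (A.image f).min'_mem himgne
      obtain ⟨sa, hsaA, hsaf⟩ := Finset.mem_image.mp hamem
      have hamin : ∀ s ∈ A, a ≤ f s := fun s hs =>
        (A.image f).min'_le (f s) (Finset.mem_image_of_mem f hs)
      have hta : t - 1 ≤ a := by
        have := ((Finset.mem_filter.mp hsaA).2).1
        rwa [hsaf] at this
      -- squares in A with f = a
      have hAa_sub : A.filter (fun s => f s = a) ⊆ S.filter (fun s => f s = a) :=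
        Finset.filter_subset_filter _ (Finset.filter_subset _ _)
      have hAa_card : (A.filter (fun s => f s = a)).card ≤ k + 1 :=
        le_trans (Finset.card_le_card hAa_sub) (hmult a)
      have hsplit : (A.filter (fun s => f s = a)).card
          + (A.filter (fun s => ¬ f s = a)).card = A.card :=
        Finset.card_filter_add_card_filter_not _
      have hge : k + 1 ≤ (A.filter (fun s => ¬ f s = a)).card := by omega
      -- the second smallest value b
      have hBne : (A.filter (fun s => ¬ f s = a)).Nonempty :=
        Finset.card_pos.mp (by omega)
      have hBimgne : ((A.filter (fun s => ¬ f s = a)).image f).Nonempty := hBne.image f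
      set b := ((A.filter (fun s => ¬ f s = a)).image f).min' hBimgne with hb
      have hbmem : b ∈ (A.filter (fun s => ¬ f s = a)).image f :=
        Finset.min'_mem _ _
      obtain ⟨sb, hsbmem, hsbf⟩ := Finset.mem_image.mp hbmem
      have hsbA : sb ∈ A := (Finset.mem_filter.mp hsbmem).1
      have hsbne : ¬ f sb = a := (Finset.mem_filter.mp hsbmem).2
      have hab : a < b := by
        have := hamin sb hsbA
        rw [hsbf] at this hsbne
        exact lt_of_le_of_ne this (fun h => hsbne h.symm)
      have hbmin : ∀ s ∈ A, ¬ f s = a → b ≤ f s := fun s hs hne =>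
        Finset.min'_le _ (f s)
          (Finset.mem_image_of_mem f (Finset.mem_filter.mpr ⟨hs, hne⟩))
      have hbA : t - 1 ≤ b ∧ b ≤ t := by
        have := (Finset.mem_filter.mp hsbA).2
        rw [hsbf] at this; exact this
      -- lower bound at the new line t' = b + 1
      have hsub2 : A.filter (fun s => ¬ f s = a) ⊆
          S.filter (fun s => b + 1 - 1 ≤ f s ∧ f s ≤ b + 1) := by
        intro s hs
        have hsA := (Finset.mem_filter.mp hs).1
        have hsne := (Finset.mem_filter.mp hs).2
        have h1 : b ≤ f s := hbmin s hsA hsne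
        have h2 : f s ≤ t := ((Finset.mem_filter.mp hsA).2).2
        refine Finset.mem_filter.mpr ⟨(Finset.mem_filter.mp hsA).1, ?_, ?_⟩
        · linarith
        · linarith [hbA.1]
      have hlow : k + 1 ≤ (S.filter (fun s => b + 1 - 1 ≤ f s ∧ f s ≤ b + 1)).card :=
        le_trans hge (Finset.card_le_card hsub2)
      -- the measure decreases: squares with f = a leave
      have hsa_in : sa ∈ S.filter (fun s => f s = a) :=
        Finset.mem_filter.mpr ⟨(Finset.mem_filter.mp hsaA).1, hsaf⟩
      have hdisj2 : Disjoint (S.filter (fun s => b + 1 - 1 ≤ f s))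
          (S.filter (fun s => f s = a)) := by
        rw [Finset.disjoint_left]
        intro s hs1 hs2
        have h1 := (Finset.mem_filter.mp hs1).2
        have h2 := (Finset.mem_filter.mp hs2).2
        rw [h2] at h1
        linarith
      have hunion : S.filter (fun s => b + 1 - 1 ≤ f s) ∪ S.filter (fun s => f s = a)
          ⊆ S.filter (fun s => t - 1 ≤ f s) := by
        intro s hs
        rcases Finset.mem_union.mp hs with h | h
        · have h' := Finset.mem_filter.mp h
          exact Finset.mem_filter.mpr ⟨h'.1, by linarith [h'.2, hbA.1]⟩
        · have h' := Finset.mem_filter.mp h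
          exact Finset.mem_filter.mpr ⟨h'.1, by rw [h'.2]; exact hta⟩
      have hcardu : (S.filter (fun s => b + 1 - 1 ≤ f s)).card
          + (S.filter (fun s => f s = a)).card
          = (S.filter (fun s => b + 1 - 1 ≤ f s) ∪ S.filter (fun s => f s = a)).card :=
        (Finset.card_union_of_disjoint hdisj2).symm
      have hpos : 1 ≤ (S.filter (fun s => f s = a)).card :=
        Finset.card_pos.mpr ⟨sa, hsa_in⟩
      have hmeas : (S.filter (fun s => b + 1 - 1 ≤ f s)).card ≤ n := by
        have := Finset.card_le_card hunion
        omega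
      exact ih (b + 1) hmeas hlow


lemma vLine_inter_s17 (c x y : ℝ) :
    (vLine c ∩ closedSquare x y).Nonempty ↔ (c - 1 ≤ x ∧ x ≤ c) := by
  constructor
  · rintro ⟨p, hp1, hp2⟩
    have h1 : p.1 = c := hp1
    have h2 : p.1 ∈ Set.Icc x (x + 1) := hp2.1
    rw [h1] at h2
    exact ⟨by linarith [h2.2], h2.1⟩
  · rintro ⟨h1, h2⟩
    exact ⟨(c, y), rfl, ⟨⟨h2, by linarith⟩, ⟨le_refl y, by linarith⟩⟩⟩

lemma hLine_inter_s17 (c x y : ℝ) :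
    (hLine c ∩ closedSquare x y).Nonempty ↔ (c - 1 ≤ y ∧ y ≤ c) := by
  constructor
  · rintro ⟨p, hp1, hp2⟩
    have h1 : p.2 = c := hp1
    have h2 : p.2 ∈ Set.Icc y (y + 1) := hp2.2
    rw [h1] at h2
    exact ⟨by linarith [h2.2], h2.1⟩
  · rintro ⟨h1, h2⟩
    exact ⟨(x, c), rfl, ⟨⟨le_refl x, by linarith⟩, ⟨h2, by linarith⟩⟩⟩

open Classical in
lemma ncard_sep (S : Finset (ℝ × ℝ)) (P : ℝ × ℝ → Prop) :
    {s ∈ (S : Set (ℝ × ℝ)) | P s}.ncard = (S.filter P).card := by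
  rw [← Set.ncard_coe_finset]
  congr 1
  ext s
  simp [Finset.mem_filter]

lemma vLine_ne_hLine_s17 (a b : ℝ) : vLine a ≠ hLine b := by
  intro h
  have h1 : ((a, b + 1) : ℝ × ℝ) ∈ vLine a := rfl
  rw [h] at h1
  have h2 : b + 1 = b := h1
  linarith

/-- In a data-reduced family (at most `k+1` squares share any lower-left `x`- or
`y`-coordinate), if some axis-parallel line meets more than `2k+1` squares, then some
parallel line meets at least `k+1` and at most `2k+1` squares. -/
theorem intermediate_line_exists (k : ℕ) (S : Finset (ℝ × ℝ))
    (hdisj : ∀ s ∈ S, ∀ s' ∈ S, s ≠ s' →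
      Disjoint (closedSquare s.1 s.2) (closedSquare s'.1 s'.2))
    (hx : ∀ x0 : ℝ, {s ∈ (S : Set (ℝ × ℝ)) | s.1 = x0}.ncard ≤ k + 1)
    (hy : ∀ y0 : ℝ, {s ∈ (S : Set (ℝ × ℝ)) | s.2 = y0}.ncard ≤ k + 1)
    (ℓ : Set (ℝ × ℝ)) (hap : IsAPLine ℓ)
    (hbig : 2 * k + 1 <
      {s ∈ (S : Set (ℝ × ℝ)) | (ℓ ∩ closedSquare s.1 s.2).Nonempty}.ncard) :
    ∃ ℓ' : Set (ℝ × ℝ),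
      ((∃ c, ℓ = vLine c) → ∃ c, ℓ' = vLine c) ∧
      ((∃ c, ℓ = hLine c) → ∃ c, ℓ' = hLine c) ∧
      k + 1 ≤ {s ∈ (S : Set (ℝ × ℝ)) |
        (ℓ' ∩ closedSquare s.1 s.2).Nonempty}.ncard ∧
      {s ∈ (S : Set (ℝ × ℝ)) |
        (ℓ' ∩ closedSquare s.1 s.2).Nonempty}.ncard ≤ 2 * k + 1 := by
  classical
  rcases hap with ⟨c, hc⟩ | ⟨c, hc⟩
  · subst hc
    have hmult : ∀ x0 : ℝ, (S.filter (fun s => s.1 = x0)).card ≤ k + 1 := by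
      intro x0
      have := hx x0
      rwa [ncard_sep] at this
    have hbig' : 2 * k + 1 <
        (S.filter (fun s => c - 1 ≤ s.1 ∧ s.1 ≤ c)).card := by
      calc 2 * k + 1 < {s ∈ (S : Set (ℝ × ℝ)) |
            (vLine c ∩ closedSquare s.1 s.2).Nonempty}.ncard := hbig
        _ = (S.filter (fun s => c - 1 ≤ s.1 ∧ s.1 ≤ c)).card := by
            rw [ncard_sep]
            congr 1
            apply Finset.filter_congr
            intro s _
            simpa using vLine_inter_s17 c s.1 s.2
    obtain ⟨t', ht1, ht2⟩ := core_sweep k S Prod.fst hmult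
      (S.filter (fun s => c - 1 ≤ s.1)).card c le_rfl (by omega)
    refine ⟨vLine t', fun _ => ⟨t', rfl⟩, fun ⟨c', hc'⟩ =>
      absurd hc' (vLine_ne_hLine_s17 c c'), ?_⟩
    have heq : {s ∈ (S : Set (ℝ × ℝ)) |
        (vLine t' ∩ closedSquare s.1 s.2).Nonempty}.ncard
        = (S.filter (fun s => t' - 1 ≤ s.1 ∧ s.1 ≤ t')).card := by
      rw [ncard_sep]
      congr 1
      apply Finset.filter_congr
      intro s _
      simpa using vLine_inter_s17 t' s.1 s.2
    rw [heq]
    exact ⟨ht1, ht2⟩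
  · subst hc
    have hmult : ∀ y0 : ℝ, (S.filter (fun s => s.2 = y0)).card ≤ k + 1 := by
      intro y0
      have := hy y0
      rwa [ncard_sep] at this
    have hbig' : 2 * k + 1 <
        (S.filter (fun s => c - 1 ≤ s.2 ∧ s.2 ≤ c)).card := by
      calc 2 * k + 1 < {s ∈ (S : Set (ℝ × ℝ)) |
            (hLine c ∩ closedSquare s.1 s.2).Nonempty}.ncard := hbig
        _ = (S.filter (fun s => c - 1 ≤ s.2 ∧ s.2 ≤ c)).card := by
            rw [ncard_sep]
            congr 1
            apply Finset.filter_congr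
            intro s _
            simpa using hLine_inter_s17 c s.1 s.2
    obtain ⟨t', ht1, ht2⟩ := core_sweep k S Prod.snd hmult
      (S.filter (fun s => c - 1 ≤ s.2)).card c le_rfl (by omega)
    refine ⟨hLine t', fun ⟨c', hc'⟩ =>
      absurd hc'.symm (vLine_ne_hLine_s17 c' c), fun _ => ⟨t', rfl⟩, ?_⟩
    have heq : {s ∈ (S : Set (ℝ × ℝ)) |
        (hLine t' ∩ closedSquare s.1 s.2).Nonempty}.ncard
        = (S.filter (fun s => t' - 1 ≤ s.2 ∧ s.2 ≤ t')).card := by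
      rw [ncard_sep]
      congr 1
      apply Finset.filter_congr
      intro s _
      simpa using hLine_inter_s17 t' s.1 s.2
    rw [heq]
    exact ⟨ht1, ht2⟩
end

section
/- Let 𝒟 be a finite set of directions in ℝ², let c ≥ 1 and k ≥ 1 be integers, and let S be a finite family of subsets of ℝ² that is c-shallow with respect to 𝒟, i.e., for any two 𝒟-lines ℓ, ℓ' with different directions, at most c members of S are intersected by both ℓ and ℓ'. Let ℓ be a 𝒟-line with |I(ℓ)| > c·k, where I(ℓ) = {s ∈ S : s ∩ ℓ ≠ ∅}. If L is a set of at most k 𝒟-lines that stabs S, then L contains a line parallel to ℓ that intersects at least c+1 members of I(ℓ). -/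
/-- `l` is a line with direction `d`, i.e., a translate of the one-dimensional linear
subspace `d` of the plane. -/
def IsDirLine (d : Submodule ℝ (ℝ × ℝ)) (l : Set (ℝ × ℝ)) : Prop :=
  ∃ p : ℝ × ℝ, l = (fun w => p + w) '' (d : Set (ℝ × ℝ))

/-- If `S` is `c`-shallow with respect to a finite set `𝒟` of directions and some
`𝒟`-line `ℓ` meets more than `c·k` members of `S`, then any set of at most `k`
`𝒟`-lines stabbing `S` contains a line parallel to `ℓ` meeting at least `c+1`
members of `I(ℓ)`. -/
theorem shallow_branching (𝒟 : Finset (Submodule ℝ (ℝ × ℝ)))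
    (h𝒟 : ∀ d ∈ 𝒟, Module.finrank ℝ d = 1)
    (c k : ℕ) (hc : 1 ≤ c) (hk : 1 ≤ k)
    (S : Finset (Set (ℝ × ℝ)))
    (hshallow : ∀ d ∈ 𝒟, ∀ d' ∈ 𝒟, d ≠ d' →
      ∀ l l' : Set (ℝ × ℝ), IsDirLine d l → IsDirLine d' l' →
        {s ∈ (S : Set (Set (ℝ × ℝ))) |
          (s ∩ l).Nonempty ∧ (s ∩ l').Nonempty}.ncard ≤ c)
    (d : Submodule ℝ (ℝ × ℝ)) (hd : d ∈ 𝒟)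
    (ℓ : Set (ℝ × ℝ)) (hℓ : IsDirLine d ℓ)
    (hbig : c * k < {s ∈ (S : Set (Set (ℝ × ℝ))) | (s ∩ ℓ).Nonempty}.ncard)
    (L : Finset (Set (ℝ × ℝ))) (hLcard : L.card ≤ k)
    (hL : ∀ l ∈ L, ∃ d' ∈ 𝒟, IsDirLine d' l)
    (hstab : ∀ s ∈ S, ∃ l ∈ L, (s ∩ l).Nonempty) :
    ∃ l ∈ L, IsDirLine d l ∧
      c + 1 ≤ {s ∈ (S : Set (Set (ℝ × ℝ))) |
        (s ∩ ℓ).Nonempty ∧ (s ∩ l).Nonempty}.ncard := by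
  classical
  set T : Finset (Set (ℝ × ℝ)) := S.filter (fun s => (s ∩ ℓ).Nonempty) with hT
  have hTcard : c * k < T.card := by
    have hTcoe : {s ∈ (S : Set (Set (ℝ × ℝ))) | (s ∩ ℓ).Nonempty} = ↑T := by
      ext s; simp [hT]
    rwa [hTcoe, Set.ncard_coe_finset] at hbig
  have hsub : T ⊆ L.biUnion (fun l => T.filter (fun s => (s ∩ l).Nonempty)) := by
    intro s hs
    have hsS : s ∈ S := (Finset.mem_filter.mp hs).1
    obtain ⟨l, hlL, hsl⟩ := hstab s hsS
    exact Finset.mem_biUnion.mpr ⟨l, hlL, Finset.mem_filter.mpr ⟨hs, hsl⟩⟩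
  have hsum : T.card ≤ ∑ l ∈ L, (T.filter (fun s => (s ∩ l).Nonempty)).card :=
    le_trans (Finset.card_le_card hsub) Finset.card_biUnion_le
  have hex : ∃ l ∈ L, c + 1 ≤ (T.filter (fun s => (s ∩ l).Nonempty)).card := by
    by_contra h
    push_neg at h
    have hle : ∑ l ∈ L, (T.filter (fun s => (s ∩ l).Nonempty)).card ≤ c * k := by
      calc ∑ l ∈ L, (T.filter (fun s => (s ∩ l).Nonempty)).card
          ≤ ∑ _l ∈ L, c := Finset.sum_le_sum (fun l hl => by have := h l hl; omega)
        _ = L.card * c := by rw [Finset.sum_const, smul_eq_mul]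
        _ ≤ k * c := Nat.mul_le_mul_right _ hLcard
        _ = c * k := Nat.mul_comm _ _
    omega
  obtain ⟨l, hlL, hcard⟩ := hex
  obtain ⟨d', hd', hdir⟩ := hL l hlL
  have hncard : c + 1 ≤ {s ∈ (S : Set (Set (ℝ × ℝ))) |
      (s ∩ ℓ).Nonempty ∧ (s ∩ l).Nonempty}.ncard := by
    have heq : {s ∈ (S : Set (Set (ℝ × ℝ))) | (s ∩ ℓ).Nonempty ∧ (s ∩ l).Nonempty}
        = ↑(T.filter (fun s => (s ∩ l).Nonempty)) := by
      ext s; simp [hT, and_assoc]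
    rw [heq, Set.ncard_coe_finset]; exact hcard
  by_cases hdd : d' = d
  · exact ⟨l, hlL, hdd ▸ hdir, hncard⟩
  · exfalso
    have := hshallow d hd d' hd' (Ne.symm hdd) ℓ l hℓ hdir
    omega
end
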